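/- arXiv:1807.05349 — 3 statements merged into one kernel-verified Lean document; each statement's English description precedes it below -/
import Mathlib

section
/- Let k ∈ ℕ and η > 0. There exists δ > 0, depending only on k and η, such that for every square Q ⊂ ℝ², every polynomial P of degree at most k on ℝ², and every measurable set F ⊂ Q with |F| > η|Q|, the set F̃ = {x ∈ F : |P(x)| ≥ δ · max_{y∈Q} |P(y)|} satisfies |F̃| ≥ |F|/2. -/
open MeasureTheory

/-- `Q` is the (closed, axis-parallel) square in `ℝ²` with lower-left corner `c` and
side length `s > 0`. -/
def IsSquare2 (Q : Set (EuclideanSpace ℝ (Fin 2))) (c : EuclideanSpace ℝ (Fin 2))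
    (s : ℝ) : Prop :=
  0 < s ∧ Q = {x | ∀ i : Fin 2, x i ∈ Set.Icc (c i) (c i + s)}

/-- `P : ℝ² → ℝ` is (given by) a polynomial of total degree at most `k`. -/
def IsPolyDeg (P : EuclideanSpace ℝ (Fin 2) → ℝ) (k : ℕ) : Prop :=
  ∃ p : MvPolynomial (Fin 2) ℝ, p.totalDegree ≤ k ∧
    ∀ x, P x = MvPolynomial.eval (fun i => x i) p

open Set Polynomial

lemma interp_bound (n : ℕ) (p : ℝ[X]) (hdeg : p.natDegree ≤ n) (x : Fin (n+1) → ℝ)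
    (d : ℝ) (hd : 0 < d) (hgap : ∀ i j : Fin (n+1), i < j → d ≤ x j - x i)
    (L ε : ℝ) (hε : 0 ≤ ε) (hLd : d ≤ L)
    (t : ℝ) (ht : ∀ i, |t - x i| ≤ L)
    (hsmall : ∀ i, |p.eval (x i)| ≤ ε) :
    |p.eval t| ≤ (n+1) * (L/d)^n * ε := by
  classical
  have hinj : Set.InjOn x (Finset.univ : Finset (Fin (n+1))) := by
    intro i _ j _ hij
    by_contra hne
    rcases lt_or_gt_of_ne (a := i) (b := j) (fun h => hne (by rw [h])) with h | h
    · have := hgap i j h; nlinarith [hij]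
    · have := hgap j i h; nlinarith [hij]
  have hdlt : p.degree < (Finset.univ : Finset (Fin (n+1))).card := by
    rw [Finset.card_univ, Fintype.card_fin]
    calc p.degree ≤ (p.natDegree : WithBot ℕ) := degree_le_natDegree
    _ ≤ (n : WithBot ℕ) := by exact_mod_cast hdeg
    _ < ((n+1 : ℕ) : WithBot ℕ) := by exact_mod_cast Nat.lt_succ_self n
  have hrep := Lagrange.eq_interpolate (f := p) hinj hdlt
  have habs : ∀ i : Fin (n+1), |(Lagrange.basis Finset.univ x i).eval t| ≤ (L/d)^n := by
    intro i
    rw [Lagrange.basis, eval_prod]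
    rw [Finset.abs_prod]
    have hcard : (Finset.univ.erase i).card = n := by
      rw [Finset.card_erase_of_mem (Finset.mem_univ i), Finset.card_univ, Fintype.card_fin]; omega
    calc ∏ j ∈ Finset.univ.erase i, |(Lagrange.basisDivisor (x i) (x j)).eval t|
        ≤ ∏ j ∈ Finset.univ.erase i, (L/d) := by
          apply Finset.prod_le_prod
          · intro j _; positivity
          · intro j hj
            have hji : j ≠ i := (Finset.mem_erase.mp hj).1
            have hxij : d ≤ |x i - x j| := by
              rcases lt_or_gt_of_ne (a := j) (b := i) hji with h | h
              · have := hgap j i h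
                calc d ≤ x i - x j := this
                _ ≤ |x i - x j| := le_abs_self _
              · have := hgap i j h
                rw [abs_sub_comm]
                calc d ≤ x j - x i := this
                _ ≤ |x j - x i| := le_abs_self _
            rw [Lagrange.basisDivisor]
            simp only [eval_mul, eval_C, eval_sub, eval_X, abs_mul, abs_inv]
            rw [inv_mul_eq_div]
            apply div_le_div₀ (le_trans hd.le hLd) (ht j) hd hxij
    _ = (L/d)^n := by rw [Finset.prod_const, hcard]
  rw [hrep, Lagrange.interpolate_apply, eval_finset_sum]
  calc |∑ i, ((C (p.eval (x i))) * Lagrange.basis Finset.univ x i).eval t|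
      ≤ ∑ i : Fin (n+1), |((C (p.eval (x i))) * Lagrange.basis Finset.univ x i).eval t| :=
        Finset.abs_sum_le_sum_abs _ _
    _ ≤ ∑ i : Fin (n+1), (L/d)^n * ε := by
        apply Finset.sum_le_sum
        intro i _
        rw [eval_mul, eval_C, abs_mul]
        rw [mul_comm ((L/d)^n) ε]
        exact mul_le_mul (hsmall i) (habs i) (abs_nonneg _) hε
    _ = (n+1) * (L/d)^n * ε := by
        rw [Finset.sum_const, Finset.card_univ, Fintype.card_fin]
        ring

lemma exists_separated_points (E : Set ℝ) (hE : MeasurableSet E) (a s : ℝ) (hs : 0 < s)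
    (hEsub : E ⊆ Set.Icc a (a+s)) (m : ℕ) (hm : 0 < m) (μ : ℝ) (hμ : 0 < μ)
    (hvol : ENNReal.ofReal (2 * m * μ) ≤ volume E) :
    ∃ x : Fin m → ℝ, (∀ i, x i ∈ E) ∧ ∀ i j : Fin m, i < j → μ ≤ x j - x i := by
  classical
  set g : ℝ → ℝ := fun t => (volume (E ∩ Set.Icc a t)).toReal with hg
  have hEfin : volume E ≠ ⊤ := by
    apply ne_top_of_le_ne_top _ (measure_mono hEsub)
    simp [Real.volume_Icc]
  have hfin : ∀ t, volume (E ∩ Set.Icc a t) ≠ ⊤ :=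
    fun t => ne_top_of_le_ne_top hEfin (measure_mono inter_subset_left)
  -- monotone
  have hmono : Monotone g := by
    intro t₁ t₂ h
    apply ENNReal.toReal_mono (hfin t₂)
    exact measure_mono (inter_subset_inter_right _ (Icc_subset_Icc_right h))
  -- subadditive split
  have hsplit : ∀ t₁ t₂ : ℝ, t₁ ≤ t₂ →
      g t₂ ≤ g t₁ + (volume (E ∩ Set.Ioc t₁ t₂)).toReal := by
    intro t₁ t₂ h
    have hsub : E ∩ Set.Icc a t₂ ⊆ (E ∩ Set.Icc a t₁) ∪ (E ∩ Set.Ioc t₁ t₂) := by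
      rintro y ⟨hyE, hy1, hy2⟩
      by_cases hyt : y ≤ t₁
      · exact Or.inl ⟨hyE, hy1, hyt⟩
      · exact Or.inr ⟨hyE, not_le.mp hyt, hy2⟩
    calc g t₂ ≤ (volume ((E ∩ Set.Icc a t₁) ∪ (E ∩ Set.Ioc t₁ t₂))).toReal := by
          apply ENNReal.toReal_mono _ (measure_mono hsub)
          exact ne_top_of_le_ne_top hEfin (measure_mono (union_subset inter_subset_left inter_subset_left))
      _ ≤ g t₁ + (volume (E ∩ Set.Ioc t₁ t₂)).toReal := by
          rw [← ENNReal.toReal_add (hfin t₁) (ne_top_of_le_ne_top hEfin (measure_mono inter_subset_left))]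
          apply ENNReal.toReal_mono
          · exact ENNReal.add_ne_top.mpr ⟨hfin t₁, ne_top_of_le_ne_top hEfin (measure_mono inter_subset_left)⟩
          · exact measure_union_le _ _
  have hlip : ∀ t₁ t₂ : ℝ, t₁ ≤ t₂ → g t₂ - g t₁ ≤ t₂ - t₁ := by
    intro t₁ t₂ h
    have := hsplit t₁ t₂ h
    have h2 : (volume (E ∩ Set.Ioc t₁ t₂)).toReal ≤ t₂ - t₁ := by
      have : volume (E ∩ Set.Ioc t₁ t₂) ≤ ENNReal.ofReal (t₂ - t₁) := by
        calc volume (E ∩ Set.Ioc t₁ t₂) ≤ volume (Set.Ioc t₁ t₂) := measure_mono inter_subset_right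
        _ = ENNReal.ofReal (t₂ - t₁) := Real.volume_Ioc
      calc (volume (E ∩ Set.Ioc t₁ t₂)).toReal ≤ (ENNReal.ofReal (t₂ - t₁)).toReal :=
            ENNReal.toReal_mono ENNReal.ofReal_ne_top this
        _ = t₂ - t₁ := ENNReal.toReal_ofReal (by linarith)
    linarith
  have hcont : Continuous g := by
    have : LipschitzWith 1 g := by
      apply LipschitzWith.of_dist_le_mul
      intro t₁ t₂
      rw [NNReal.coe_one, one_mul, Real.dist_eq, Real.dist_eq]
      rcases le_total t₁ t₂ with h | h
      · rw [abs_sub_comm, abs_of_nonneg (by linarith [hmono h]), abs_of_nonpos (by linarith)]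
        linarith [hlip t₁ t₂ h]
      · rw [abs_of_nonneg (by linarith [hmono h]), abs_of_nonneg (by linarith)]
        exact hlip t₂ t₁ h
    exact this.continuous
  have hga : g a = 0 := by
    have : volume (E ∩ Set.Icc a a) ≤ volume (Set.Icc a a) := measure_mono inter_subset_right
    rw [Set.Icc_self] at this
    simp only [hg]
    rw [Set.Icc_self]
    have h0 : volume (E ∩ {a}) = 0 := le_antisymm (le_trans this (by simp)) zero_le
    rw [h0]; simp
  have hgs : 2 * m * μ ≤ g (a + s) := by
    have hEeq : E ∩ Set.Icc a (a+s) = E := inter_eq_self_of_subset_left hEsub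
    simp only [hg, hEeq]
    rw [← ENNReal.toReal_ofReal (by positivity : (0:ℝ) ≤ 2 * m * μ)]
    exact ENNReal.toReal_mono hEfin hvol
  -- choose t_j with g t_j = j * μ for j ≤ 2m-1
  have hT : ∀ j : ℕ, j ≤ 2 * m - 1 → ∃ t ∈ Set.Icc a (a+s), g t = j * μ := by
    intro j hj
    have hval : (j : ℝ) * μ ∈ Set.Icc (g a) (g (a+s)) := by
      constructor
      · rw [hga]; positivity
      · calc (j : ℝ) * μ ≤ (2 * m - 1) * μ := by
              apply mul_le_mul_of_nonneg_right _ hμ.le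
              have : (j : ℝ) ≤ ((2 * m - 1 : ℕ) : ℝ) := by exact_mod_cast hj
              calc (j:ℝ) ≤ ((2 * m - 1 : ℕ) : ℝ) := this
              _ ≤ 2 * m - 1 := by
                  push_cast [Nat.cast_sub (by omega : 1 ≤ 2 * m)]
                  ring_nf; rfl
        _ ≤ 2 * m * μ := by nlinarith [hμ.le]
        _ ≤ g (a+s) := hgs
    obtain ⟨t, ht, hgt⟩ := intermediate_value_Icc (by linarith : a ≤ a + s) hcont.continuousOn hval
    exact ⟨t, ht, hgt⟩
  choose T hTmem hTval using fun j (hj : j ≤ 2*m-1) => hT j hj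
  -- now pick points
  have key : ∀ i : Fin m, ∃ y ∈ E, y ∈ Set.Ioc (T (2*i) (by omega)) (T (2*i+1) (by omega)) := by
    intro i
    set t₁ := T (2*i) (by omega)
    set t₂ := T (2*i+1) (by omega)
    have hle : t₁ ≤ t₂ := by
      by_contra hlt
      push_neg at hlt
      have := hmono hlt.le
      rw [hTval _ _, hTval _ _] at this
      have : ((2*(i:ℕ)+1 : ℕ) : ℝ) * μ ≤ ((2*(i:ℕ) : ℕ) : ℝ) * μ := this
      push_cast at this
      nlinarith
    have hdiff : μ ≤ (volume (E ∩ Set.Ioc t₁ t₂)).toReal := by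
      have h1 := hsplit t₁ t₂ hle
      rw [show g t₁ = ((2*(i:ℕ) : ℕ) : ℝ) * μ from hTval _ _,
        show g t₂ = ((2*(i:ℕ)+1 : ℕ) : ℝ) * μ from hTval _ _] at h1
      push_cast at h1
      linarith
    have hpos : 0 < volume (E ∩ Set.Ioc t₁ t₂) := by
      by_contra hz
      push_neg at hz
      have : volume (E ∩ Set.Ioc t₁ t₂) = 0 := le_antisymm hz zero_le
      rw [this] at hdiff
      simp at hdiff
      linarith
    obtain ⟨y, hy⟩ := nonempty_of_measure_ne_zero hpos.ne'
    exact ⟨y, hy.1, hy.2⟩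
  choose x hxE hxIoc using key
  refine ⟨x, hxE, ?_⟩
  intro i j hij
  have h1 : x i ≤ T (2*i+1) (by omega) := (hxIoc i).2
  have h2 : T (2*j) (by omega) < x j := (hxIoc j).1
  have h3 : T (2*i+1) (by omega) ≤ T (2*j) (by omega) → True := fun _ => trivial
  -- gap between T (2i+1) and T (2j)
  have hgap : μ ≤ T (2*j) (by omega) - T (2*i+1) (by omega) := by
    set t₁ := T (2*i+1) (by omega)
    set t₂ := T (2*j) (by omega)
    have hv1 : g t₁ = ((2*(i:ℕ)+1 : ℕ) : ℝ) * μ := hTval _ _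
    have hv2 : g t₂ = ((2*(j:ℕ) : ℕ) : ℝ) * μ := hTval _ _
    have hle : t₁ ≤ t₂ := by
      by_contra hlt
      push_neg at hlt
      have := hmono hlt.le
      rw [hv1, hv2] at this
      push_cast at this
      have hij' : (i:ℕ) < (j:ℕ) := hij
      have hij'' : ((i:ℕ):ℝ) + 1 ≤ ((j:ℕ):ℝ) := by exact_mod_cast hij'
      nlinarith [hij'', hμ]
    have := hlip t₁ t₂ hle
    rw [hv1, hv2] at this
    push_cast at this
    have hij' : (i:ℕ) < (j:ℕ) := hij
    have : (2*(j:ℕ) : ℝ) * μ - (2*(i:ℕ)+1) * μ ≤ t₂ - t₁ := by linarith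
    have h5 : μ ≤ (2*(j:ℕ) : ℝ) * μ - (2*(i:ℕ)+1) * μ := by
      have : (i:ℝ) + 1 ≤ (j:ℝ) := by exact_mod_cast hij'
      nlinarith
    linarith
  linarith

lemma remez1D (n : ℕ) (lam : ℝ) (hlam : 0 < lam) (hlam1 : lam ≤ 1) :
    ∃ δ : ℝ, 0 < δ ∧ ∀ p : ℝ[X], p.natDegree ≤ n → ∀ a s : ℝ, 0 < s → ∀ M : ℝ, 0 < M →
      (∃ t ∈ Set.Icc a (a+s), M ≤ |p.eval t|) →
      volume {t ∈ Set.Icc a (a+s) | |p.eval t| ≤ δ * M} ≤ ENNReal.ofReal (lam * s) := by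
  set C : ℝ := (n+1) * (2*(n+1)/lam)^n with hC
  have hCpos : 0 < C := by positivity
  refine ⟨1 / (2*C), by positivity, ?_⟩
  intro p hdeg a s hs M hM ⟨t₀, ht₀, hMt₀⟩
  set δ : ℝ := 1 / (2*C)
  set E : Set ℝ := {t ∈ Set.Icc a (a+s) | |p.eval t| ≤ δ * M} with hEdef
  have hEmeas : MeasurableSet E := by
    have : E = Set.Icc a (a+s) ∩ (fun t => |p.eval t|) ⁻¹' Set.Iic (δ * M) := by
      ext t; simp [hEdef, Set.mem_setOf_eq]
    rw [this]
    exact measurableSet_Icc.inter ((continuous_abs.comp p.continuous).measurable measurableSet_Iic)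
  by_contra hcon
  push_neg at hcon
  have hle : ENNReal.ofReal (lam * s) ≤ volume E := hcon.le
  set d : ℝ := lam * s / (2 * (n+1)) with hd
  have hdpos : 0 < d := by positivity
  have hvol : ENNReal.ofReal (2 * ((n+1 : ℕ):ℝ) * d) ≤ volume E := by
    have heq : (2 * ((n+1:ℕ):ℝ) * d) = lam * s := by
      rw [hd]; push_cast; field_simp
    rw [heq]; exact hle
  obtain ⟨x, hxE, hgap⟩ := exists_separated_points E hEmeas a s hs
    (fun t ht => ht.1) (n+1) (Nat.succ_pos n) d hdpos hvol
  have hbound := interp_bound n p hdeg x d hdpos hgap s (δ * M) (by positivity)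
    (by
      rw [hd]
      rw [div_le_iff₀ (by positivity)]
      nlinarith [hs, hlam, hlam1])
    t₀
    (by
      intro i
      have h1 := (hxE i).1
      rw [abs_le]
      constructor <;> [skip; skip] <;>
        · rcases ht₀ with ⟨h2, h3⟩; rcases h1 with ⟨h4, h5⟩; linarith)
    (fun i => (hxE i).2)
  have hsd : s / d = 2 * ((n:ℝ)+1) / lam := by
    rw [hd]; field_simp
  rw [hsd] at hbound
  have hbound' : |p.eval t₀| ≤ C * (δ * M) := hbound
  have h2 : C * (δ * M) = M / 2 := by
    simp only [δ]
    field_simp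
  rw [h2] at hbound'
  linarith

noncomputable def sliceY (p : MvPolynomial (Fin 2) ℝ) (a : ℝ) : ℝ[X] :=
  p.support.sum (fun m => Polynomial.C (p.coeff m * a ^ m 0) * Polynomial.X ^ m 1)

noncomputable def sliceX (p : MvPolynomial (Fin 2) ℝ) (b : ℝ) : ℝ[X] :=
  p.support.sum (fun m => Polynomial.C (p.coeff m * b ^ m 1) * Polynomial.X ^ m 0)

lemma sliceY_eval (p : MvPolynomial (Fin 2) ℝ) (a b : ℝ) :
    (sliceY p a).eval b = MvPolynomial.eval ![a, b] p := by
  rw [MvPolynomial.eval_eq', sliceY, Polynomial.eval_finset_sum]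
  apply Finset.sum_congr rfl
  intro m _
  rw [eval_mul, eval_C, eval_pow, eval_X, Fin.prod_univ_two]
  simp [Matrix.cons_val_zero, Matrix.cons_val_one]
  ring

lemma sliceX_eval (p : MvPolynomial (Fin 2) ℝ) (a b : ℝ) :
    (sliceX p b).eval a = MvPolynomial.eval ![a, b] p := by
  rw [MvPolynomial.eval_eq', sliceX, Polynomial.eval_finset_sum]
  apply Finset.sum_congr rfl
  intro m _
  rw [eval_mul, eval_C, eval_pow, eval_X, Fin.prod_univ_two]
  simp [Matrix.cons_val_zero, Matrix.cons_val_one]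
  ring

lemma coord_le_totalDegree (p : MvPolynomial (Fin 2) ℝ) (m : Fin 2 →₀ ℕ)
    (hm : m ∈ p.support) (i : Fin 2) : m i ≤ p.totalDegree := by
  refine le_trans ?_ (MvPolynomial.le_totalDegree hm)
  rw [Finsupp.sum]
  by_cases h : m i = 0
  · simp [h]
  · exact Finset.single_le_sum (fun j _ => Nat.zero_le _) (Finsupp.mem_support_iff.mpr h)

lemma sliceY_natDegree (p : MvPolynomial (Fin 2) ℝ) (a : ℝ) (k : ℕ)
    (hk : p.totalDegree ≤ k) : (sliceY p a).natDegree ≤ k := by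
  apply Polynomial.natDegree_sum_le_of_forall_le
  intro m hm
  refine le_trans (natDegree_C_mul_le _ _) ?_
  refine le_trans (natDegree_X_pow_le _) ?_  -- maybe wrong name
  exact le_trans (coord_le_totalDegree p m hm 1) hk

lemma sliceX_natDegree (p : MvPolynomial (Fin 2) ℝ) (b : ℝ) (k : ℕ)
    (hk : p.totalDegree ≤ k) : (sliceX p b).natDegree ≤ k := by
  apply Polynomial.natDegree_sum_le_of_forall_le
  intro m hm
  refine le_trans (natDegree_C_mul_le _ _) ?_
  refine le_trans (natDegree_X_pow_le _) ?_
  exact le_trans (coord_le_totalDegree p m hm 0) hk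

lemma ev2_continuous (p : MvPolynomial (Fin 2) ℝ) :
    Continuous (fun y : ℝ × ℝ => MvPolynomial.eval ![y.1, y.2] p) := by
  have : (fun y : ℝ × ℝ => MvPolynomial.eval ![y.1, y.2] p)
      = fun y => ∑ m ∈ p.support, p.coeff m * y.1 ^ m 0 * y.2 ^ m 1 := by
    funext y
    rw [MvPolynomial.eval_eq']
    apply Finset.sum_congr rfl
    intro m _
    rw [Fin.prod_univ_two]
    simp [Matrix.cons_val_zero, Matrix.cons_val_one]
    ring
  rw [this]
  exact continuous_finset_sum _ fun m _ =>
    ((continuous_const.mul ((continuous_fst.pow _))).mul (continuous_snd.pow _))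

lemma remez2D (k : ℕ) (lam : ℝ) (hlam : 0 < lam) (hlam1 : lam ≤ 1) :
    ∃ δ : ℝ, 0 < δ ∧ ∀ p : MvPolynomial (Fin 2) ℝ, p.totalDegree ≤ k →
      ∀ (c₁ c₂ s : ℝ), 0 < s → ∀ M : ℝ, 0 < M →
      (∃ y ∈ Set.Icc c₁ (c₁+s) ×ˢ Set.Icc c₂ (c₂+s), M ≤ |MvPolynomial.eval ![y.1, y.2] p|) →
      volume {y ∈ Set.Icc c₁ (c₁+s) ×ˢ Set.Icc c₂ (c₂+s) |
          |MvPolynomial.eval ![y.1, y.2] p| ≤ δ * M}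
        ≤ ENNReal.ofReal (2 * lam * s^2) := by
  obtain ⟨δ₁, hδ₁, h1d⟩ := remez1D k lam hlam hlam1
  refine ⟨δ₁ * δ₁, by positivity, ?_⟩
  intro p hdeg c₁ c₂ s hs M hM ⟨w, hw, hMw⟩
  set δ : ℝ := δ₁ * δ₁
  set K := Set.Icc c₁ (c₁+s) ×ˢ Set.Icc c₂ (c₂+s) with hK
  set B := {y ∈ K | |MvPolynomial.eval ![y.1, y.2] p| ≤ δ * M} with hB
  set A := {x ∈ Set.Icc c₁ (c₁+s) | |(sliceX p w.2).eval x| ≤ δ₁ * M} with hA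
  have hAmeas : MeasurableSet A := by
    have : A = Set.Icc c₁ (c₁+s) ∩ (fun x => |(sliceX p w.2).eval x|) ⁻¹' Set.Iic (δ₁ * M) := by
      ext x; simp [hA, Set.mem_setOf_eq]
    rw [this]
    exact measurableSet_Icc.inter
      ((continuous_abs.comp (sliceX p w.2).continuous).measurable measurableSet_Iic)
  have hBmeas : MeasurableSet B := by
    have : B = K ∩ (fun y : ℝ × ℝ => |MvPolynomial.eval ![y.1, y.2] p|) ⁻¹' Set.Iic (δ * M) := by
      ext y; simp [hB, Set.mem_setOf_eq]
    rw [this]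
    exact (measurableSet_Icc.prod measurableSet_Icc).inter
      ((continuous_abs.comp (ev2_continuous p)).measurable measurableSet_Iic)
  -- volume of A
  have hAvol : volume A ≤ ENNReal.ofReal (lam * s) := by
    apply h1d (sliceX p w.2) (sliceX_natDegree p w.2 k hdeg) c₁ s hs M hM
    exact ⟨w.1, hw.1, by rw [sliceX_eval]; exact hMw⟩
  -- slice bound
  have hslice : ∀ x : ℝ, volume (Prod.mk x ⁻¹' B) ≤
      A.indicator (fun _ => ENNReal.ofReal s) x
        + (Set.Icc c₁ (c₁+s)).indicator (fun _ => ENNReal.ofReal (lam * s)) x := by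
    intro x
    by_cases hx : x ∈ Set.Icc c₁ (c₁+s)
    · by_cases hxA : x ∈ A
      · have hsub : Prod.mk x ⁻¹' B ⊆ Set.Icc c₂ (c₂+s) := by
          rintro y ⟨⟨_, hy2⟩, _⟩; exact hy2
        calc volume (Prod.mk x ⁻¹' B) ≤ volume (Set.Icc c₂ (c₂+s)) := measure_mono hsub
          _ = ENNReal.ofReal s := by rw [Real.volume_Icc]; ring_nf
          _ ≤ _ := by
              rw [Set.indicator_of_mem hxA]
              exact le_add_right (le_refl _)
      · -- good slice: apply 1D remez in y-variable
        have hxgood : δ₁ * M < |(sliceX p w.2).eval x| := by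
          by_contra hc
          push_neg at hc
          exact hxA ⟨hx, hc⟩
        have hwit : ∃ t ∈ Set.Icc c₂ (c₂+s), δ₁ * M ≤ |(sliceY p x).eval t| := by
          refine ⟨w.2, hw.2, ?_⟩
          rw [sliceY_eval, ← sliceX_eval]
          exact hxgood.le
        have h1 := h1d (sliceY p x) (sliceY_natDegree p x k hdeg) c₂ s hs (δ₁ * M)
          (by positivity) hwit
        have hsub : Prod.mk x ⁻¹' B ⊆
            {t ∈ Set.Icc c₂ (c₂+s) | |(sliceY p x).eval t| ≤ δ₁ * (δ₁ * M)} := by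
          rintro y ⟨⟨_, hy2⟩, hyv⟩
          refine ⟨hy2, ?_⟩
          rw [sliceY_eval]
          calc |MvPolynomial.eval ![x, y] p| ≤ δ * M := hyv
            _ = δ₁ * (δ₁ * M) := by ring
        calc volume (Prod.mk x ⁻¹' B)
            ≤ volume {t ∈ Set.Icc c₂ (c₂+s) | |(sliceY p x).eval t| ≤ δ₁ * (δ₁ * M)} :=
              measure_mono hsub
          _ ≤ ENNReal.ofReal (lam * s) := h1
          _ ≤ _ := by
              rw [Set.indicator_of_mem hx]
              exact le_add_left (le_refl _)
    · have : Prod.mk x ⁻¹' B = ∅ := by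
        ext y
        simp only [Set.mem_preimage, Set.mem_empty_iff_false, iff_false]
        rintro ⟨⟨hy1, _⟩, _⟩
        exact hx hy1
      rw [this]
      simp
  -- Fubini
  have hvol : volume B ≤ ENNReal.ofReal s * volume A
      + ENNReal.ofReal (lam * s) * volume (Set.Icc c₁ (c₁+s)) := by
    rw [Measure.volume_eq_prod, Measure.prod_apply hBmeas]
    calc ∫⁻ x, volume (Prod.mk x ⁻¹' B)
        ≤ ∫⁻ x, (A.indicator (fun _ => ENNReal.ofReal s) x
            + (Set.Icc c₁ (c₁+s)).indicator (fun _ => ENNReal.ofReal (lam * s)) x) :=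
          lintegral_mono hslice
      _ = ENNReal.ofReal s * volume A + ENNReal.ofReal (lam * s) * volume (Set.Icc c₁ (c₁+s)) := by
          rw [lintegral_add_left (measurable_const.indicator hAmeas)]
          rw [lintegral_indicator hAmeas, lintegral_indicator measurableSet_Icc,
            setLIntegral_const, setLIntegral_const]
  refine le_trans hvol ?_
  have hIccvol : volume (Set.Icc c₁ (c₁+s)) = ENNReal.ofReal s := by
    rw [Real.volume_Icc]; ring_nf
  rw [hIccvol]
  calc ENNReal.ofReal s * volume A + ENNReal.ofReal (lam * s) * ENNReal.ofReal s
      ≤ ENNReal.ofReal s * ENNReal.ofReal (lam * s)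
        + ENNReal.ofReal (lam * s) * ENNReal.ofReal s := by
        exact add_le_add (mul_le_mul' (le_refl _) hAvol) (le_refl _)
    _ = ENNReal.ofReal (2 * lam * s^2) := by
        rw [← ENNReal.ofReal_mul hs.le, ← ENNReal.ofReal_mul (by positivity : (0:ℝ) ≤ lam * s),
          ← ENNReal.ofReal_add (by positivity) (by positivity)]
        congr 1
        ring

lemma phi_measure_preserving :
    MeasurePreserving (fun x : EuclideanSpace ℝ (Fin 2) => (x 0, x 1)) volume volume := by
  have h1 := EuclideanSpace.volume_preserving_symm_measurableEquiv_toLp (Fin 2)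
  have h2 := MeasureTheory.volume_preserving_finTwoArrow ℝ
  exact h2.comp h1

/-- For `k ∈ ℕ` and `η > 0` there is `δ > 0`, depending only on `k` and `η`,
such that for every square `Q ⊆ ℝ²`, every polynomial `P` of degree at most `k`, and every
measurable `F ⊆ Q` with `|F| > η|Q|`, the set
`F̃ = {x ∈ F : |P(x)| ≥ δ max_{y ∈ Q} |P(y)|}` satisfies `|F̃| ≥ |F|/2`. -/
theorem poly_level_set_large (k : ℕ) (η : ℝ) (hη : 0 < η) :
    ∃ δ : ℝ, 0 < δ ∧
      ∀ (Q : Set (EuclideanSpace ℝ (Fin 2))) (c : EuclideanSpace ℝ (Fin 2)) (s : ℝ),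
        IsSquare2 Q c s →
        ∀ P : EuclideanSpace ℝ (Fin 2) → ℝ, IsPolyDeg P k →
        ∀ F : Set (EuclideanSpace ℝ (Fin 2)), F ⊆ Q → MeasurableSet F →
          ENNReal.ofReal η * volume Q < volume F →
          volume F / 2 ≤ volume {x ∈ F | δ * (⨆ y ∈ Q, |P y|) ≤ |P x|} := by
  set lam : ℝ := min (η/4) 1 with hlamdef
  have hlam : 0 < lam := lt_min (by positivity) one_pos
  have hlam1 : lam ≤ 1 := min_le_right _ _
  obtain ⟨δ, hδ, h2d⟩ := remez2D k lam hlam hlam1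
  refine ⟨δ, hδ, ?_⟩
  rintro Q c s ⟨hs, hQeq⟩ P ⟨p, hpdeg, hPeq⟩ F hFQ hFmeas hFvol
  set φ : EuclideanSpace ℝ (Fin 2) → ℝ × ℝ := fun x => (x 0, x 1) with hφdef
  have hφ : MeasurePreserving φ volume volume := phi_measure_preserving
  set K := Set.Icc (c 0) (c 0 + s) ×ˢ Set.Icc (c 1) (c 1 + s) with hKdef
  have hKmeas : MeasurableSet K := measurableSet_Icc.prod measurableSet_Icc
  have hQK : ∀ x, x ∈ Q ↔ φ x ∈ K := by
    intro x
    rw [hQeq]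
    constructor
    · intro h; exact ⟨h 0, h 1⟩
    · rintro ⟨h0, h1⟩ i; fin_cases i; exacts [h0, h1]
  have hPg : ∀ x, P x = MvPolynomial.eval ![x 0, x 1] p := by
    intro x
    rw [hPeq, show (fun i => (x : EuclideanSpace ℝ (Fin 2)) i) = ![x 0, x 1]
      from funext fun i => by fin_cases i <;> simp]
  have hKcomp : IsCompact K := isCompact_Icc.prod isCompact_Icc
  have hKne : K.Nonempty := ⟨(c 0, c 1), by
    constructor <;> constructor <;> [skip; linarith; skip; linarith] <;> rfl⟩
  obtain ⟨w, hwK, hwmax'⟩ := hKcomp.exists_isMaxOn hKne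
    (continuous_abs.comp (ev2_continuous p)).continuousOn
  have hwmax : ∀ y ∈ K, |MvPolynomial.eval ![y.1, y.2] p| ≤ |MvPolynomial.eval ![w.1, w.2] p| :=
    fun y hy => hwmax' hy
  set M : ℝ := |MvPolynomial.eval ![w.1, w.2] p| with hMdef
  have hSle : (⨆ y ∈ Q, |P y|) ≤ M := by
    apply Real.iSup_le _ (abs_nonneg _)
    intro y
    apply Real.iSup_le _ (abs_nonneg _)
    intro hy
    rw [hPg y]
    exact hwmax (φ y) ((hQK y).1 hy)
  rcases (abs_nonneg (MvPolynomial.eval ![w.1, w.2] p)).eq_or_lt with hM0 | hMpos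
  · -- M = 0
    have hFt : {x ∈ F | δ * (⨆ y ∈ Q, |P y|) ≤ |P x|} = F := by
      ext x
      simp only [Set.mem_sep_iff, and_iff_left_iff_imp]
      intro hxF
      calc δ * (⨆ y ∈ Q, |P y|) ≤ δ * M := mul_le_mul_of_nonneg_left hSle hδ.le
        _ = 0 := by rw [hMdef, ← hM0, mul_zero]
        _ ≤ |P x| := abs_nonneg _
    rw [hFt]
    exact ENNReal.half_le_self
  · -- M > 0
    have hwit : ∃ y ∈ K, M ≤ |MvPolynomial.eval ![y.1, y.2] p| := ⟨w, hwK, le_refl _⟩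
    have hBvol := h2d p hpdeg (c 0) (c 1) s hs M hMpos hwit
    set Bprod := {y ∈ K | |MvPolynomial.eval ![y.1, y.2] p| ≤ δ * M} with hBproddef
    have hBprodmeas : MeasurableSet Bprod := by
      have : Bprod = K ∩ (fun y : ℝ × ℝ => |MvPolynomial.eval ![y.1, y.2] p|) ⁻¹'
          Set.Iic (δ * M) := by
        ext y; simp [hBproddef, Set.mem_setOf_eq]
      rw [this]
      exact hKmeas.inter
        ((continuous_abs.comp (ev2_continuous p)).measurable measurableSet_Iic)
    have hBeu : volume (φ ⁻¹' Bprod) = volume Bprod :=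
      hφ.measure_preimage hBprodmeas.nullMeasurableSet
    have hcover : F ⊆ {x ∈ F | δ * (⨆ y ∈ Q, |P y|) ≤ |P x|} ∪ φ ⁻¹' Bprod := by
      intro x hxF
      by_cases hx : δ * (⨆ y ∈ Q, |P y|) ≤ |P x|
      · exact Or.inl ⟨hxF, hx⟩
      · push_neg at hx
        right
        refine ⟨(hQK x).1 (hFQ hxF), ?_⟩
        show |MvPolynomial.eval ![x 0, x 1] p| ≤ δ * M
        rw [← hPg x]
        calc |P x| ≤ δ * (⨆ y ∈ Q, |P y|) := hx.le
          _ ≤ δ * M := mul_le_mul_of_nonneg_left hSle hδ.le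
    have hQvol : volume Q = ENNReal.ofReal s * ENNReal.ofReal s := by
      have hQpre : Q = φ ⁻¹' K := Set.ext fun x => hQK x
      rw [hQpre, hφ.measure_preimage hKmeas.nullMeasurableSet, hKdef,
        Measure.volume_eq_prod, Measure.prod_prod, Real.volume_Icc, Real.volume_Icc]
      ring_nf
    have hQfin : volume Q ≠ ⊤ := by
      rw [hQvol]; exact ENNReal.mul_ne_top ENNReal.ofReal_ne_top ENNReal.ofReal_ne_top
    have hFfin : volume F ≠ ⊤ := ne_top_of_le_ne_top hQfin (measure_mono hFQ)
    have hB2 : volume (φ ⁻¹' Bprod) ≤ ENNReal.ofReal (η/2 * s^2) := by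
      rw [hBeu]
      refine le_trans hBvol (ENNReal.ofReal_le_ofReal ?_)
      have hll : lam ≤ η/4 := min_le_left _ _
      nlinarith [sq_nonneg s, sq_abs s]
    have hhalf : ENNReal.ofReal (η/2 * s^2) ≤ volume F / 2 := by
      rw [ENNReal.le_div_iff_mul_le (Or.inl two_ne_zero) (Or.inl ENNReal.ofNat_ne_top)]
      have heq : ENNReal.ofReal (η/2 * s^2) * 2 = ENNReal.ofReal η * volume Q := by
        rw [hQvol, show (2:ENNReal) = ENNReal.ofReal 2 from by simp,
          ← ENNReal.ofReal_mul (show (0:ℝ) ≤ s from hs.le),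
          ← ENNReal.ofReal_mul (show (0:ℝ) ≤ η from hη.le),
          ← ENNReal.ofReal_mul (show (0:ℝ) ≤ η/2*s^2 from by positivity)]
        congr 1
        ring
      rw [heq]
      exact hFvol.le
    have hsum : volume F ≤ volume {x ∈ F | δ * (⨆ y ∈ Q, |P y|) ≤ |P x|} + volume F / 2 := by
      calc volume F ≤ volume ({x ∈ F | δ * (⨆ y ∈ Q, |P y|) ≤ |P x|} ∪ φ ⁻¹' Bprod) :=
            measure_mono hcover
        _ ≤ volume {x ∈ F | δ * (⨆ y ∈ Q, |P y|) ≤ |P x|} + volume (φ ⁻¹' Bprod) :=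
            measure_union_le _ _
        _ ≤ _ := add_le_add (le_refl _) (le_trans hB2 hhalf)
    calc volume F / 2 = volume F - volume F / 2 := (ENNReal.sub_half hFfin).symm
      _ ≤ volume {x ∈ F | δ * (⨆ y ∈ Q, |P y|) ≤ |P x|} := by
          rw [tsub_le_iff_right]
          exact hsum
end

section
/- Let Ψ be a doubling Young function, Q a square in ℝ², P a polynomial of degree at most k on ℝ², and E, F ⊂ Q measurable sets with |E|, |F| > η|Q| for some η > 0. Then ∫_E Ψ(|P(x)|) dx ≤ C ∫_F Ψ(|P(x)|) dx, where C depends only on η, k, and the doubling constant of Ψ. -/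
open MeasureTheory

/-- Greedy selection of δ-separated points in a set of large measure. -/
lemma exists_separated {δ : ℝ} (hδ : 0 < δ) :
    ∀ (n : ℕ) (A : Set ℝ), ENNReal.ofReal (n * (2*δ)) < volume A →
    ∃ t : Fin (n+1) → ℝ, (∀ i, t i ∈ A) ∧ (∀ i j, i ≠ j → δ ≤ |t i - t j|) := by
  intro n
  induction n with
  | zero =>
    intro A hA
    have h0 : volume A ≠ 0 := by
      intro h; rw [h] at hA; exact absurd hA (by simp)
    obtain ⟨t0, ht0⟩ := MeasureTheory.nonempty_of_measure_ne_zero h0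
    refine ⟨fun _ => t0, fun _ => ht0, fun i j hij => absurd (Fin.ext ?_) hij⟩
    have := i.isLt; have := j.isLt; omega
  | succ n ih =>
    intro A hA
    have h0 : volume A ≠ 0 := by
      intro h; rw [h] at hA; exact absurd hA (by simp)
    obtain ⟨t0, ht0⟩ := MeasureTheory.nonempty_of_measure_ne_zero h0
    set A' := A \ Set.Icc (t0 - δ) (t0 + δ) with hA'def
    have hsub : volume A ≤ volume A' + ENNReal.ofReal (2*δ) := by
      have : A ⊆ A' ∪ Set.Icc (t0 - δ) (t0 + δ) := by
        intro x hx
        by_cases h : x ∈ Set.Icc (t0 - δ) (t0 + δ)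
        · exact Or.inr h
        · exact Or.inl ⟨hx, h⟩
      calc volume A ≤ volume (A' ∪ Set.Icc (t0 - δ) (t0 + δ)) := measure_mono this
        _ ≤ volume A' + volume (Set.Icc (t0 - δ) (t0 + δ)) := measure_union_le _ _
        _ = volume A' + ENNReal.ofReal (2*δ) := by
            rw [Real.volume_Icc]; ring_nf
    have hA'vol : ENNReal.ofReal (n * (2*δ)) < volume A' := by
      by_contra h
      push_neg at h
      have : volume A ≤ ENNReal.ofReal ((n+1 : ℕ) * (2*δ)) := by
        calc volume A ≤ volume A' + ENNReal.ofReal (2*δ) := hsub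
          _ ≤ ENNReal.ofReal (n * (2*δ)) + ENNReal.ofReal (2*δ) := by gcongr
          _ = ENNReal.ofReal ((n+1 : ℕ) * (2*δ)) := by
              rw [← ENNReal.ofReal_add (by positivity) (by positivity)]
              push_cast; ring_nf
      exact absurd (hA.trans_le this) (lt_irrefl _)
    obtain ⟨t, htA, htsep⟩ := ih A' hA'vol
    have htA' : ∀ i, t i ∈ A := fun i => (htA i).1
    have htfar : ∀ i, δ ≤ |t i - t0| := by
      intro i
      have h := (htA i).2
      simp only [Set.mem_Icc, not_and_or, not_le] at h
      rcases h with h | h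
      · rw [abs_sub_comm]; rw [abs_of_pos (by linarith)]; linarith
      · rw [abs_of_pos (by linarith)]; linarith
    refine ⟨Fin.cons t0 t, ?_, ?_⟩
    · intro i
      refine Fin.cases ?_ ?_ i
      · simpa using ht0
      · intro j; simpa using htA' j
    · intro i j hij
      rcases Fin.eq_zero_or_eq_succ i with rfl | ⟨i', rfl⟩ <;>
        rcases Fin.eq_zero_or_eq_succ j with rfl | ⟨j', rfl⟩
      · exact absurd rfl hij
      · simpa [abs_sub_comm] using htfar j'
      · simpa using htfar i'
      · have hne : i' ≠ j' := fun h => hij (by rw [h])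
        simpa using htsep i' j' hne

/-- 1D Remez-type inequality. -/
lemma remez1D_s9 (k : ℕ) {β s m a : ℝ} (hβ : 0 < β) (hs : 0 < s)
    (q : Polynomial ℝ) (hq : q.natDegree ≤ k)
    (A : Set ℝ) (hA : A ⊆ Set.Icc a (a+s))
    (hvol : ENNReal.ofReal (β * s) ≤ volume A)
    (hm : ∀ t ∈ A, |q.eval t| ≤ m) :
    ∀ x ∈ Set.Icc a (a+s), |q.eval x| ≤ (k+1) * (2*(k+1)/β)^k * m := by
  intro x hx
  have hkpos : (0:ℝ) < k + 1 := by positivity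
  -- m is nonnegative
  have hane : A.Nonempty := by
    apply MeasureTheory.nonempty_of_measure_ne_zero (μ := volume)
    intro h
    rw [h] at hvol
    have : β * s ≤ 0 := by
      by_contra hc
      push_neg at hc
      exact absurd (le_antisymm hvol zero_le) (by simp [ENNReal.ofReal_eq_zero]; nlinarith)
    nlinarith
  obtain ⟨t₀, ht₀⟩ := hane
  have hm0 : 0 ≤ m := le_trans (abs_nonneg _) (hm t₀ ht₀)
  set δ : ℝ := β * s / (2*(k+1)) with hδdef
  have hδ : 0 < δ := by positivity
  -- get k+1 separated points
  have hsep : ENNReal.ofReal (k * (2*δ)) < volume A := by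
    refine lt_of_lt_of_le ?_ hvol
    apply ENNReal.ofReal_lt_ofReal_iff_of_nonneg (by positivity) |>.mpr
    rw [hδdef]
    have : (k:ℝ) * (2 * (β * s / (2*(k+1)))) = β * s * (k / (k+1)) := by
      field_simp
    rw [this]
    have hlt : (k:ℝ) / (k+1) < 1 := by
      rw [div_lt_one hkpos]; linarith
    nlinarith [mul_pos hβ hs]
  obtain ⟨t, htA, htsep⟩ := exists_separated hδ k A hsep
  have htinj : Function.Injective t := by
    intro i j hij
    by_contra h
    have := htsep i j h
    rw [hij, sub_self, abs_zero] at this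
    linarith
  have hsδ : s / δ = 2*(k+1)/β := by
    rw [hδdef]; field_simp
  have hsδpos : 0 < s / δ := by positivity
  by_cases hq0 : q = 0
  · rw [hq0]; simp; positivity
  -- Lagrange interpolation
  have hdeg : q.degree < (Finset.univ : Finset (Fin (k+1))).card := by
    rw [Finset.card_univ, Fintype.card_fin]
    exact lt_of_le_of_lt Polynomial.degree_le_natDegree (by exact_mod_cast Nat.lt_succ_of_le hq)
  have hinterp := Lagrange.eq_interpolate (v := t) (Set.injOn_of_injective htinj) hdeg
  have heval : q.eval x = ∑ i : Fin (k+1), q.eval (t i) * (Lagrange.basis Finset.univ t i).eval x := by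
    conv_lhs => rw [hinterp]
    rw [Lagrange.interpolate_apply, Polynomial.eval_finset_sum]
    simp [Polynomial.eval_mul]
  rw [heval]
  calc |∑ i : Fin (k+1), q.eval (t i) * (Lagrange.basis Finset.univ t i).eval x|
      ≤ ∑ i : Fin (k+1), |q.eval (t i) * (Lagrange.basis Finset.univ t i).eval x| :=
        Finset.abs_sum_le_sum_abs _ _
    _ ≤ ∑ _i : Fin (k+1), m * (s/δ)^k := by
        apply Finset.sum_le_sum
        intro i _
        rw [abs_mul]
        have h1 : |q.eval (t i)| ≤ m := hm _ (htA i)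
        have h2 : |(Lagrange.basis Finset.univ t i).eval x| ≤ (s/δ)^k := by
          rw [Lagrange.basis, Polynomial.eval_prod]
          rw [Finset.abs_prod]
          have hcard : (Finset.univ.erase i).card = k := by
            rw [Finset.card_erase_of_mem (Finset.mem_univ i), Finset.card_univ,
              Fintype.card_fin]
            omega
          calc ∏ j ∈ Finset.univ.erase i, |(Lagrange.basisDivisor (t i) (t j)).eval x|
              ≤ ∏ _j ∈ Finset.univ.erase i, (s/δ) := by
                apply Finset.prod_le_prod (fun _ _ => abs_nonneg _)
                intro j hj
                have hji : j ≠ i := Finset.ne_of_mem_erase hj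
                have hij' : i ≠ j := fun h => hji h.symm
                rw [Lagrange.basisDivisor]
                rw [Polynomial.eval_mul, Polynomial.eval_C, Polynomial.eval_sub,
                  Polynomial.eval_X, Polynomial.eval_C, abs_mul, abs_inv]
                have hd : δ ≤ |t i - t j| := htsep i j hij'
                have hxs : |x - t j| ≤ s := by
                  have h1 := hA (htA j)
                  rw [abs_le]
                  constructor <;> [nlinarith [hx.1, hx.2, h1.1, h1.2];
                    nlinarith [hx.1, hx.2, h1.1, h1.2]]
                calc |t i - t j|⁻¹ * |x - t j| ≤ δ⁻¹ * s := by
                      apply mul_le_mul _ hxs (abs_nonneg _) (by positivity)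
                      exact inv_anti₀ hδ hd
                  _ = s / δ := by rw [div_eq_mul_inv]; ring
              _ = (s/δ)^k := by rw [Finset.prod_const, hcard]
        exact mul_le_mul h1 h2 (abs_nonneg _) hm0
    _ = (k+1) * (2*(k+1)/β)^k * m := by
        rw [Finset.sum_const, Finset.card_univ, Fintype.card_fin, hsδ]
        push_cast
        ring


lemma aeval_slice_natDegree (p : MvPolynomial (Fin 2) ℝ) (g : Fin 2 → Polynomial ℝ)
    (hg : ∀ i, (g i).natDegree ≤ 1) :
    (MvPolynomial.aeval g p).natDegree ≤ p.totalDegree := by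
  rw [MvPolynomial.aeval_def, MvPolynomial.eval₂_eq]
  apply Polynomial.natDegree_sum_le_of_forall_le
  intro d hd
  calc (algebraMap ℝ (Polynomial ℝ) (MvPolynomial.coeff d p) *
          ∏ i ∈ d.support, g i ^ d i).natDegree
      ≤ (∏ i ∈ d.support, g i ^ d i).natDegree := by
        rw [Polynomial.algebraMap_eq]
        exact Polynomial.natDegree_C_mul_le _ _
    _ ≤ ∑ i ∈ d.support, (g i ^ d i).natDegree := Polynomial.natDegree_prod_le _ _
    _ ≤ ∑ i ∈ d.support, d i := by
        apply Finset.sum_le_sum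
        intro i _
        calc (g i ^ d i).natDegree ≤ d i * (g i).natDegree := Polynomial.natDegree_pow_le
          _ ≤ d i * 1 := Nat.mul_le_mul_left _ (hg i)
          _ = d i := Nat.mul_one _
    _ ≤ p.totalDegree := MvPolynomial.le_totalDegree hd

lemma aeval_slice_eval (p : MvPolynomial (Fin 2) ℝ) (g : Fin 2 → Polynomial ℝ) (t : ℝ) :
    (MvPolynomial.aeval g p).eval t = MvPolynomial.eval (fun i => (g i).eval t) p := by
  induction p using MvPolynomial.induction_on with
  | C a => simp
  | add p q hp hq => simp [hp, hq]
  | mul_X p n hp => simp [hp]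

/-- 2D Remez-type inequality on a square, via Fubini + two 1D applications. -/
lemma remez2D_s9 (k : ℕ) {β s m a b : ℝ} (hβ : 0 < β) (hs : 0 < s)
    (f : ℝ × ℝ → ℝ)
    (hfv : ∀ x : ℝ, ∃ q : Polynomial ℝ, q.natDegree ≤ k ∧ ∀ y, f (x, y) = q.eval y)
    (hfh : ∀ y : ℝ, ∃ q : Polynomial ℝ, q.natDegree ≤ k ∧ ∀ x, f (x, y) = q.eval x)
    (A : Set (ℝ × ℝ)) (hAm : MeasurableSet A)
    (hA : A ⊆ Set.Icc a (a+s) ×ˢ Set.Icc b (b+s))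
    (hvol : ENNReal.ofReal (β * (s*s)) ≤ volume A)
    (hm : ∀ z ∈ A, |f z| ≤ m) :
    ∀ z ∈ Set.Icc a (a+s) ×ˢ Set.Icc b (b+s),
      |f z| ≤ ((k+1) * (2*(k+1)/(β/2))^k)^2 * m := by
  have hβ2 : 0 < β/2 := by positivity
  set M1 : ℝ := (k+1) * (2*(k+1)/(β/2))^k with hM1
  have hslice_meas : Measurable (fun x : ℝ => volume (Prod.mk x ⁻¹' A)) :=
    measurable_measure_prodMk_left hAm
  set G : Set ℝ := {x | ENNReal.ofReal ((β/2)*s) ≤ volume (Prod.mk x ⁻¹' A)} with hGdef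
  have hGmeas : MeasurableSet G := hslice_meas measurableSet_Ici
  have hGsub : G ⊆ Set.Icc a (a+s) := by
    intro x hxG
    by_contra hx
    have hempty : Prod.mk x ⁻¹' A = ∅ := by
      ext y
      simp only [Set.mem_preimage, Set.mem_empty_iff_false, iff_false]
      intro hy
      exact hx (hA hy).1
    have h0 : ENNReal.ofReal ((β/2)*s) ≤ 0 := by
      have : ENNReal.ofReal ((β/2)*s) ≤ volume (Prod.mk x ⁻¹' A) := hxG
      rwa [hempty, measure_empty] at this
    have h2 : (0:ℝ) < (β/2)*s := by positivity
    simp [ENNReal.ofReal_eq_zero] at h0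
    linarith
  have hslice_sub : ∀ x, Prod.mk x ⁻¹' A ⊆ Set.Icc b (b+s) := fun x y hy => (hA hy).2
  have hslice_le : ∀ x, volume (Prod.mk x ⁻¹' A) ≤ ENNReal.ofReal s := by
    intro x
    calc volume (Prod.mk x ⁻¹' A) ≤ volume (Set.Icc b (b+s)) := measure_mono (hslice_sub x)
      _ = ENNReal.ofReal s := by rw [Real.volume_Icc]; ring_nf
  -- G has large measure
  have hGvol : ENNReal.ofReal ((β/2)*s) ≤ volume G := by
    by_contra hcon
    push_neg at hcon
    have hAvol : volume A = ∫⁻ x, volume (Prod.mk x ⁻¹' A) := by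
      rw [MeasureTheory.Measure.volume_eq_prod, MeasureTheory.Measure.prod_apply hAm]
    have h1 : ∫⁻ x in G, volume (Prod.mk x ⁻¹' A) < ENNReal.ofReal s * ENNReal.ofReal ((β/2)*s) := by
      calc ∫⁻ x in G, volume (Prod.mk x ⁻¹' A) ≤ ∫⁻ _x in G, ENNReal.ofReal s :=
            setLIntegral_mono' hGmeas (fun x _ => hslice_le x)
        _ = ENNReal.ofReal s * volume G := setLIntegral_const _ _
        _ < ENNReal.ofReal s * ENNReal.ofReal ((β/2)*s) := by
            exact ENNReal.mul_lt_mul_right (ENNReal.ofReal_pos.mpr hs).ne' (by simp) hcon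
    have h2 : ∫⁻ x in Gᶜ, volume (Prod.mk x ⁻¹' A)
        ≤ ENNReal.ofReal ((β/2)*s) * ENNReal.ofReal s := by
      calc ∫⁻ x in Gᶜ, volume (Prod.mk x ⁻¹' A)
          ≤ ∫⁻ x in Gᶜ, (Set.Icc a (a+s)).indicator (fun _ => ENNReal.ofReal ((β/2)*s)) x := by
            apply setLIntegral_mono' hGmeas.compl
            intro x hxGc
            by_cases hxI : x ∈ Set.Icc a (a+s)
            · rw [Set.indicator_of_mem hxI]
              exact le_of_lt (by simpa [hGdef] using hxGc)
            · rw [Set.indicator_of_notMem hxI]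
              have hempty : Prod.mk x ⁻¹' A = ∅ := by
                ext y
                simp only [Set.mem_preimage, Set.mem_empty_iff_false, iff_false]
                intro hy
                exact hxI (hA hy).1
              simp [hempty]
        _ = ∫⁻ _x in Set.Icc a (a+s), ENNReal.ofReal ((β/2)*s) ∂(volume.restrict Gᶜ) := by
            rw [lintegral_indicator measurableSet_Icc]
        _ = ENNReal.ofReal ((β/2)*s) * (volume.restrict Gᶜ) (Set.Icc a (a+s)) :=
            setLIntegral_const _ _
        _ ≤ ENNReal.ofReal ((β/2)*s) * ENNReal.ofReal s := by
            gcongr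
            calc (volume.restrict Gᶜ) (Set.Icc a (a+s)) ≤ volume (Set.Icc a (a+s)) :=
                  Measure.restrict_le_self _
              _ = ENNReal.ofReal s := by rw [Real.volume_Icc]; ring_nf
    have : volume A < ENNReal.ofReal (β * (s*s)) := by
      calc volume A = ∫⁻ x, volume (Prod.mk x ⁻¹' A) := hAvol
        _ = (∫⁻ x in G, volume (Prod.mk x ⁻¹' A)) + ∫⁻ x in Gᶜ, volume (Prod.mk x ⁻¹' A) :=
            (lintegral_add_compl _ hGmeas).symm
        _ < ENNReal.ofReal s * ENNReal.ofReal ((β/2)*s)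
            + ENNReal.ofReal ((β/2)*s) * ENNReal.ofReal s := by
            apply ENNReal.add_lt_add_of_lt_of_le ?_ h1 h2
            refine ne_top_of_le_ne_top ?_ h2
            simp [ENNReal.mul_eq_top]
        _ = ENNReal.ofReal (β * (s*s)) := by
            rw [← ENNReal.ofReal_mul hs.le, ← ENNReal.ofReal_mul (by positivity),
              ← ENNReal.ofReal_add (by positivity) (by positivity)]
            ring_nf
    exact absurd (lt_of_le_of_lt hvol this) (lt_irrefl _)
  -- now the two 1D steps
  rintro ⟨x₀, y₀⟩ ⟨hx₀, hy₀⟩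
  have hM1nn : 0 ≤ M1 := by positivity
  -- A is nonempty, so m ≥ 0
  have hane : A.Nonempty := by
    apply MeasureTheory.nonempty_of_measure_ne_zero (μ := volume)
    intro h
    rw [h] at hvol
    simp [ENNReal.ofReal_eq_zero] at hvol
    nlinarith [mul_pos (mul_pos hβ hs) hs]
  obtain ⟨z₀, hz₀⟩ := hane
  have hm0 : 0 ≤ m := le_trans (abs_nonneg _) (hm z₀ hz₀)
  have hvert : ∀ x ∈ G, |f (x, y₀)| ≤ M1 * m := by
    intro x hxG
    obtain ⟨q, hqdeg, hqev⟩ := hfv x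
    have := remez1D_s9 k hβ2 hs q hqdeg (Prod.mk x ⁻¹' A) (hslice_sub x)
      hxG
      (fun y hy => by rw [← hqev]; exact hm _ hy) y₀ hy₀
    rw [← hqev] at this
    exact this
  obtain ⟨q', hq'deg, hq'ev⟩ := hfh y₀
  have hhor := remez1D_s9 k hβ2 hs q' hq'deg G hGsub hGvol
    (fun x hx => by rw [← hq'ev]; exact hvert x hx) x₀ hx₀
  rw [← hq'ev] at hhor
  calc |f (x₀, y₀)| ≤ M1 * (M1 * m) := hhor
    _ = M1^2 * m := by ring

noncomputable def phi2 : EuclideanSpace ℝ (Fin 2) ≃ᵐ ℝ × ℝ :=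
  (MeasurableEquiv.toLp 2 (Fin 2 → ℝ)).symm.trans (MeasurableEquiv.finTwoArrow)

lemma phi2_mp : MeasurePreserving phi2 volume volume :=
  (volume_preserving_finTwoArrow ℝ).comp (EuclideanSpace.volume_preserving_symm_measurableEquiv_toLp (Fin 2))

noncomputable def psi2 : EuclideanSpace ℝ (Fin 2) ≃ₜ ℝ × ℝ :=
  (PiLp.continuousLinearEquiv 2 ℝ (fun _ : Fin 2 => ℝ)).toHomeomorph.trans
    (Homeomorph.piFinTwo (fun _ => ℝ))


/-- Lemma `norm_equivalence`: for a doubling Young function `Ψ`, a square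
`Q`, a polynomial `P` of degree at most `k`, and measurable `E, F ⊆ Q` with
`|E|, |F| > η|Q|`, one has `∫_E Ψ(|P|) ≤ C ∫_F Ψ(|P|)` with `C = C(η, k, C₀)`. -/
theorem poly_modular_comparison (k : ℕ) (η : ℝ) (hη : 0 < η) (C0 : ℝ) :
    ∃ C : ℝ, ∀ Ψ : ℝ → ℝ,
      ConvexOn ℝ (Set.Ici 0) Ψ →
      MonotoneOn Ψ (Set.Ici 0) →
      Ψ 0 = 0 →
      (∀ t : ℝ, 0 ≤ t → 0 ≤ Ψ t) →
      (∀ t : ℝ, 0 ≤ t → Ψ (2 * t) ≤ C0 * Ψ t) →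
      ∀ (Q : Set (EuclideanSpace ℝ (Fin 2))) (c : EuclideanSpace ℝ (Fin 2)) (s : ℝ),
        IsSquare2 Q c s →
        ∀ P : EuclideanSpace ℝ (Fin 2) → ℝ, IsPolyDeg P k →
        ∀ E F : Set (EuclideanSpace ℝ (Fin 2)),
          E ⊆ Q → F ⊆ Q → MeasurableSet E → MeasurableSet F →
          ENNReal.ofReal η * volume Q < volume E →
          ENNReal.ofReal η * volume Q < volume F →
          ∫ x in E, Ψ (|P x|) ≤ C * ∫ x in F, Ψ (|P x|) := by
  have hη4 : 0 < η/2/2 := by positivity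
  set M1 : ℝ := ((k+1) * (2*(k+1)/(η/2/2))^k)^2 with hM1def
  have hM1pos : 0 < M1 := by positivity
  set M : ℝ := max M1 1 with hMdef
  have hM1 : 1 ≤ M := le_max_right _ _
  have hM1M : M1 ≤ M := le_max_left _ _
  have hMpos : 0 < M := lt_of_lt_of_le one_pos hM1
  obtain ⟨nm, hnm⟩ : ∃ n : ℕ, 2*M < 2^n := pow_unbounded_of_one_lt (2*M) one_lt_two
  set C0' : ℝ := max C0 1 with hC0'def
  have hC0'1 : 1 ≤ C0' := le_max_right _ _
  have hC0'0 : 0 ≤ C0' := by linarith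
  refine ⟨(2/η) * C0'^nm, ?_⟩
  have hCnn : 0 ≤ (2/η) * C0'^nm := mul_nonneg (by positivity) (pow_nonneg hC0'0 _)
  intro Ψ hconv hmono hΨ0 hΨnn hdoub Q c s hQ P hP E F hEQ hFQ hEmeas hFmeas hEvol hFvol
  obtain ⟨hs, hQeq⟩ := hQ
  obtain ⟨p, hpdeg, hPp⟩ := hP
  have hdoub' : ∀ t : ℝ, 0 ≤ t → Ψ (2*t) ≤ C0' * Ψ t := fun t ht =>
    (hdoub t ht).trans (mul_le_mul_of_nonneg_right (le_max_left _ _) (hΨnn t ht))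
  have hiter : ∀ (n : ℕ) (t : ℝ), 0 ≤ t → Ψ (2^n * t) ≤ C0'^n * Ψ t := by
    intro n
    induction n with
    | zero => intro t ht; simp
    | succ n ih =>
      intro t ht
      have h1 : (2:ℝ)^(n+1) * t = 2 * (2^n * t) := by ring
      rw [h1]
      calc Ψ (2 * (2^n * t)) ≤ C0' * Ψ (2^n * t) := hdoub' _ (by positivity)
        _ ≤ C0' * (C0'^n * Ψ t) := mul_le_mul_of_nonneg_left (ih t ht) hC0'0
        _ = C0'^(n+1) * Ψ t := by ring
  -- geometry
  set box : Set (ℝ × ℝ) := Set.Icc (c 0) (c 0 + s) ×ˢ Set.Icc (c 1) (c 1 + s) with hboxdef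
  have hboxmeas : MeasurableSet box := measurableSet_Icc.prod measurableSet_Icc
  have hQbox : Q = phi2 ⁻¹' box := by
    rw [hQeq]
    ext x
    simp only [Set.mem_setOf_eq, Set.mem_preimage, hboxdef, Set.mem_prod]
    constructor
    · intro h; exact ⟨h 0, h 1⟩
    · rintro ⟨h0, h1⟩ i
      fin_cases i
      · exact h0
      · exact h1
  have hQbox' : Q = psi2 ⁻¹' box := hQbox
  have hQmeas : MeasurableSet Q := hQbox ▸ hboxmeas.preimage phi2.measurable
  have hvolbox : volume box = ENNReal.ofReal (s*s) := by
    rw [hboxdef, MeasureTheory.Measure.volume_eq_prod, MeasureTheory.Measure.prod_prod,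
      Real.volume_Icc, Real.volume_Icc, add_sub_cancel_left,
      ← ENNReal.ofReal_mul hs.le]
    congr 1
    ring
  have hvolQ : volume Q = ENNReal.ofReal (s*s) := by
    rw [hQbox, phi2_mp.measure_preimage hboxmeas.nullMeasurableSet, hvolbox]
  have hvolQtop : volume Q < ⊤ := hvolQ ▸ ENNReal.ofReal_lt_top
  have hcQ : c ∈ Q := by
    rw [hQeq]
    intro i
    exact ⟨le_refl _, by linarith⟩
  have hQcompact : IsCompact Q :=
    hQbox' ▸ psi2.isCompact_preimage.mpr (isCompact_Icc.prod isCompact_Icc)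
  have hPcont : Continuous P := by
    have h1 : P = fun x => MvPolynomial.eval (fun i => x i) p := funext hPp
    rw [h1]
    exact (MvPolynomial.continuous_eval p).comp
      (PiLp.continuousLinearEquiv 2 ℝ (fun _ : Fin 2 => ℝ)).continuous
  obtain ⟨x₀, hx₀Q, hx₀max⟩ := hQcompact.exists_isMaxOn ⟨c, hcQ⟩
    ((continuous_abs.comp hPcont).continuousOn)
  rw [isMaxOn_iff] at hx₀max
  set S : ℝ := |P x₀| with hSdef
  have hS0 : 0 ≤ S := abs_nonneg _
  have hSbound : ∀ x ∈ Q, |P x| ≤ S := hx₀max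
  -- Remez on the square, transported
  have remezA : ∀ (A : Set (EuclideanSpace ℝ (Fin 2))) (m : ℝ), MeasurableSet A → A ⊆ Q →
      ENNReal.ofReal ((η/2) * (s*s)) ≤ volume A → (∀ x ∈ A, |P x| ≤ m) →
      ∀ x ∈ Q, |P x| ≤ M1 * m := by
    intro A m hAmeas hAQ hAvol hAbd x hxQ
    set f : ℝ × ℝ → ℝ := fun z => MvPolynomial.eval ![z.1, z.2] p with hfdef
    have hPf : ∀ x : EuclideanSpace ℝ (Fin 2), P x = f (phi2 x) := by
      intro x
      rw [hPp]
      show MvPolynomial.eval (fun i => x i) p = MvPolynomial.eval ![x 0, x 1] p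
      have harg : (fun i => x i) = ![x 0, x 1] := by
        funext i; fin_cases i <;> simp
      rw [harg]
    have hfv : ∀ u : ℝ, ∃ q : Polynomial ℝ, q.natDegree ≤ k ∧ ∀ y, f (u, y) = q.eval y := by
      intro u
      refine ⟨MvPolynomial.aeval ![Polynomial.C u, Polynomial.X] p, ?_, ?_⟩
      · refine le_trans (aeval_slice_natDegree p _ ?_) hpdeg
        intro i; fin_cases i <;> simp [Polynomial.natDegree_X_le]
      · intro y
        rw [aeval_slice_eval]
        have harg : (fun i => (![Polynomial.C u, Polynomial.X] i).eval y) = ![u, y] := by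
          funext i; fin_cases i <;> simp
        rw [harg]
    have hfh : ∀ y : ℝ, ∃ q : Polynomial ℝ, q.natDegree ≤ k ∧ ∀ u, f (u, y) = q.eval u := by
      intro y
      refine ⟨MvPolynomial.aeval ![Polynomial.X, Polynomial.C y] p, ?_, ?_⟩
      · refine le_trans (aeval_slice_natDegree p _ ?_) hpdeg
        intro i; fin_cases i <;> simp [Polynomial.natDegree_X_le]
      · intro u
        rw [aeval_slice_eval]
        have harg : (fun i => (![Polynomial.X, Polynomial.C y] i).eval u) = ![u, y] := by
          funext i; fin_cases i <;> simp
        rw [harg]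
    set A' : Set (ℝ × ℝ) := phi2.symm ⁻¹' A with hA'def
    have hA'meas : MeasurableSet A' := hAmeas.preimage phi2.symm.measurable
    have hA'sub : A' ⊆ box := by
      intro z hz
      have h1 : phi2.symm z ∈ Q := hAQ hz
      rw [hQbox] at h1
      have h2 : phi2 (phi2.symm z) ∈ box := h1
      rwa [MeasurableEquiv.apply_symm_apply] at h2
    have hA'vol : ENNReal.ofReal ((η/2) * (s*s)) ≤ volume A' := by
      rw [hA'def, (phi2_mp.symm phi2).measure_preimage hAmeas.nullMeasurableSet]
      exact hAvol
    have hA'bd : ∀ z ∈ A', |f z| ≤ m := by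
      intro z hz
      have h1 := hAbd _ hz
      rw [hPf (phi2.symm z), MeasurableEquiv.apply_symm_apply] at h1
      exact h1
    have happ := remez2D_s9 k (by positivity : (0:ℝ) < η/2) hs f hfv hfh A' hA'meas hA'sub
      hA'vol hA'bd (phi2 x) (by rw [hQbox] at hxQ; exact hxQ)
    rw [← hPf x] at happ
    exact happ
  -- the integrand
  set g : EuclideanSpace ℝ (Fin 2) → ℝ := fun x => Ψ (|P x|) with hgdef
  have hgnn : ∀ x, 0 ≤ g x := fun x => hΨnn _ (abs_nonneg _)
  have hmono' : Monotone (fun t : ℝ => Ψ (max t 0)) := fun u v huv =>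
    hmono (Set.mem_Ici.mpr (le_max_right u 0)) (Set.mem_Ici.mpr (le_max_right v 0))
      (max_le_max huv le_rfl)
  have hgmeas : Measurable g := by
    have h1 : g = (fun t => Ψ (max t 0)) ∘ (fun x => |P x|) := by
      funext x
      simp [hgdef, max_eq_left (abs_nonneg (P x))]
    rw [h1]
    exact hmono'.measurable.comp (continuous_abs.comp hPcont).measurable
  have hgbound : ∀ x ∈ Q, g x ≤ Ψ S := fun x hx =>
    hmono (Set.mem_Ici.mpr (abs_nonneg _)) (Set.mem_Ici.mpr hS0) (hSbound x hx)
  have hgint : IntegrableOn g Q := by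
    refine Integrable.mono' (integrableOn_const (C := Ψ S) hvolQtop.ne)
      hgmeas.aestronglyMeasurable.restrict ?_
    filter_upwards [ae_restrict_mem hQmeas] with x hx
    rw [Real.norm_eq_abs, abs_of_nonneg (hgnn x)]
    exact hgbound x hx
  -- the exceptional set
  set A : Set (EuclideanSpace ℝ (Fin 2)) := F ∩ {x | |P x| ≤ S/(2*M)} with hAdef
  have hAmeas : MeasurableSet A := hFmeas.inter
    (measurableSet_le (continuous_abs.comp hPcont).measurable measurable_const)
  have hAQ : A ⊆ Q := fun x hx => hFQ hx.1
  by_cases hAbig : ENNReal.ofReal ((η/2) * (s*s)) ≤ volume A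
  · -- degenerate case : P vanishes on Q
    have hap := remezA A (S/(2*M)) hAmeas hAQ hAbig (fun x hx => hx.2) x₀ hx₀Q
    have h1 : M1 * (S/(2*M)) ≤ M * (S/(2*M)) :=
      mul_le_mul_of_nonneg_right hM1M (by positivity)
    have h2 : M * (S/(2*M)) = S/2 := by field_simp
    have hS : S = 0 := by
      have : S ≤ S/2 := le_trans hap (h1.trans_eq h2)
      linarith [le_antisymm (by linarith) hS0]
    have hgzero : ∀ x ∈ Q, g x = 0 := by
      intro x hx
      have h3 : |P x| ≤ 0 := hS ▸ hSbound x hx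
      have h4 : |P x| = 0 := le_antisymm h3 (abs_nonneg _)
      rw [hgdef]
      simp only
      rw [h4, hΨ0]
    have hEzero : ∫ x in E, g x = 0 := by
      rw [setIntegral_congr_fun hEmeas (fun x hx => hgzero x (hEQ hx))]
      exact integral_zero _ _
    have hFzero : ∫ x in F, g x = 0 := by
      rw [setIntegral_congr_fun hFmeas (fun x hx => hgzero x (hFQ hx))]
      exact integral_zero _ _
    rw [hEzero, hFzero, mul_zero]
  · push_neg at hAbig
    set G : Set (EuclideanSpace ℝ (Fin 2)) := F \ A with hGdef
    have hGmeas : MeasurableSet G := hFmeas.diff hAmeas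
    have hGQ : G ⊆ Q := fun x hx => hFQ hx.1
    have hGvol : ENNReal.ofReal ((η/2) * (s*s)) ≤ volume G := by
      by_contra hcon
      push_neg at hcon
      have h1 : volume F ≤ volume G + volume A := by
        refine le_trans (measure_mono ?_) (measure_union_le _ _)
        intro x hx
        by_cases h : x ∈ A
        · exact Or.inr h
        · exact Or.inl ⟨hx, h⟩
      have h2 : volume G + volume A < ENNReal.ofReal (η * (s*s)) := by
        calc volume G + volume A
            < ENNReal.ofReal ((η/2)*(s*s)) + ENNReal.ofReal ((η/2)*(s*s)) :=
              ENNReal.add_lt_add hcon hAbig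
          _ = ENNReal.ofReal (η * (s*s)) := by
              rw [← ENNReal.ofReal_add (by positivity) (by positivity)]
              congr 1
              ring
      have h3 : ENNReal.ofReal (η * (s*s)) < volume F := by
        rw [ENNReal.ofReal_mul hη.le, ← hvolQ]
        exact hFvol
      exact absurd (h3.trans_le h1) (not_lt.mpr h2.le)
    -- pointwise lower bound on G
    have hGlow : ∀ x ∈ G, Ψ (S/(2*M)) ≤ g x := by
      intro x hx
      have h1 : ¬ (|P x| ≤ S/(2*M)) := fun h => hx.2 ⟨hx.1, h⟩
      push_neg at h1
      exact hmono (Set.mem_Ici.mpr (by positivity)) (Set.mem_Ici.mpr (abs_nonneg _)) h1.le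
    have hGfin : volume G ≠ ⊤ := ((measure_mono hGQ).trans_lt hvolQtop).ne
    have hEfin : volume E < ⊤ := (measure_mono hEQ).trans_lt hvolQtop
    -- upper bound for the E-integral
    have hE_le : ∫ x in E, g x ≤ (s*s) * Ψ S := by
      calc ∫ x in E, g x ≤ ∫ _x in E, Ψ S := by
            refine setIntegral_mono_on (hgint.mono_set hEQ)
              (integrableOn_const hEfin.ne) hEmeas ?_
            intro x hx
            exact hgbound x (hEQ hx)
        _ = (volume E).toReal • Ψ S := by rw [setIntegral_const]; rfl
        _ ≤ (s*s) * Ψ S := by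
            rw [smul_eq_mul]
            refine mul_le_mul_of_nonneg_right ?_ (hΨnn S hS0)
            refine ENNReal.toReal_le_of_le_ofReal (by positivity) ?_
            rw [← hvolQ]
            exact measure_mono hEQ
    -- lower bound for the F-integral
    have hF_ge : ((η/2)*(s*s)) * Ψ (S/(2*M)) ≤ ∫ x in F, g x := by
      have h2 : ∫ _x in G, Ψ (S/(2*M)) ≤ ∫ x in G, g x := by
        refine setIntegral_mono_on (integrableOn_const hGfin)
          (hgint.mono_set hGQ) hGmeas ?_
        intro x hx
        exact hGlow x hx
      have h3 : ((η/2)*(s*s)) * Ψ (S/(2*M)) ≤ ∫ _x in G, Ψ (S/(2*M)) := by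
        rw [setIntegral_const, smul_eq_mul]
        refine mul_le_mul_of_nonneg_right ?_ (hΨnn _ (by positivity))
        exact (ENNReal.ofReal_le_iff_le_toReal hGfin).mp hGvol
      have h4 : ∫ x in G, g x ≤ ∫ x in F, g x := by
        refine setIntegral_mono_set (hgint.mono_set hFQ)
          (Filter.Eventually.of_forall (fun x => hgnn x)) ?_
        exact HasSubset.Subset.eventuallyLE Set.diff_subset
      linarith
    -- doubling chain
    have hSM : Ψ S ≤ C0'^nm * Ψ (S/(2*M)) := by
      have h1 : S = 2^nm * (S/2^nm) := by
        field_simp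
      have h2 : Ψ (2^nm * (S/2^nm)) ≤ C0'^nm * Ψ (S/2^nm) := hiter nm _ (by positivity)
      have h3 : Ψ (S/2^nm) ≤ Ψ (S/(2*M)) := by
        refine hmono (Set.mem_Ici.mpr (by positivity)) (Set.mem_Ici.mpr (by positivity)) ?_
        exact div_le_div_of_nonneg_left hS0 (by positivity) hnm.le
      calc Ψ S = Ψ (2^nm * (S/2^nm)) := by rw [← h1]
        _ ≤ C0'^nm * Ψ (S/2^nm) := h2
        _ ≤ C0'^nm * Ψ (S/(2*M)) := mul_le_mul_of_nonneg_left h3 (pow_nonneg hC0'0 _)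
    -- final chain
    calc ∫ x in E, g x ≤ (s*s) * Ψ S := hE_le
      _ ≤ (s*s) * (C0'^nm * Ψ (S/(2*M))) :=
          mul_le_mul_of_nonneg_left hSM (by positivity)
      _ = (2/η * C0'^nm) * (((η/2)*(s*s)) * Ψ (S/(2*M))) := by
          field_simp
      _ ≤ (2/η * C0'^nm) * ∫ x in F, g x := mul_le_mul_of_nonneg_left hF_ge hCnn
end

section
/- Let Ψ be a doubling Young function, Q a square in ℝ², and P a polynomial of degree at most k. Then ∫_Q Ψ(|P(x)|) dx ≤ |Q| Ψ(max_{y∈Q} |P(y)|), and conversely there is a constant c > 0 depending only on k and the doubling constant of Ψ such that ∫_Q Ψ(|P(x)|) dx ≥ c |Q| Ψ(max_{y∈Q} |P(y)|). -/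
open MeasureTheory

namespace PolyModularAux
open Finset

noncomputable section

def boxSet (a b : Fin 2 → ℝ) : Set (EuclideanSpace ℝ (Fin 2)) :=
  {x | ∀ i : Fin 2, x i ∈ Set.Icc (a i) (b i)}

lemma boxSet_eq_preimage (a b : Fin 2 → ℝ) :
    boxSet a b = (MeasurableEquiv.toLp 2 (Fin 2 → ℝ)).symm ⁻¹'
      (Set.univ.pi fun i => Set.Icc (a i) (b i)) := by
  ext x
  simp [boxSet, Set.mem_pi, Pi.le_def,
    forall_and]

lemma volume_boxSet (a b : Fin 2 → ℝ) :
    volume (boxSet a b) = ∏ i : Fin 2, ENNReal.ofReal (b i - a i) := by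
  rw [boxSet_eq_preimage,
    (EuclideanSpace.volume_preserving_symm_measurableEquiv_toLp (Fin 2)).measure_preimage
      ((MeasurableSet.univ_pi fun i => measurableSet_Icc).nullMeasurableSet),
    volume_pi_pi]
  simp [Real.volume_Icc]

lemma isCompact_boxSet (a b : Fin 2 → ℝ) : IsCompact (boxSet a b) := by
  have h : boxSet a b = (PiLp.continuousLinearEquiv 2 ℝ (fun _ : Fin 2 => ℝ)) ⁻¹'
      (Set.univ.pi fun i => Set.Icc (a i) (b i)) := by
    ext x
    simp [boxSet, Set.mem_pi, Pi.le_def, forall_and, PiLp.continuousLinearEquiv_apply]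
  rw [h]
  exact ((PiLp.continuousLinearEquiv 2 ℝ (fun _ : Fin 2 => ℝ)).toHomeomorph.isCompact_preimage).2
    (isCompact_univ_pi fun i => isCompact_Icc)

lemma measurableSet_boxSet (a b : Fin 2 → ℝ) : MeasurableSet (boxSet a b) :=
  (isCompact_boxSet a b).isClosed.measurableSet


/-- evaluation of coefficient vector as a polynomial function on ℝ² -/
def ev (k : ℕ) (c : Fin (k+1) × Fin (k+1) → ℝ) (x : EuclideanSpace ℝ (Fin 2)) : ℝ :=
  ∑ m : Fin (k+1) × Fin (k+1), c m * x 0 ^ (m.1 : ℕ) * x 1 ^ (m.2 : ℕ)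

lemma continuous_ev (k : ℕ) (c : Fin (k+1) × Fin (k+1) → ℝ) : Continuous (ev k c) := by
  refine continuous_finset_sum _ fun m _ => ?_
  exact (continuous_const.mul (((EuclideanSpace.proj (0 : Fin 2)).continuous).pow _)).mul
    (((EuclideanSpace.proj (1 : Fin 2)).continuous).pow _)

/-- a polynomial function (ℝ) vanishing on [0,1] has zero coefficients -/
lemma polyfun_zero {n : ℕ} (g : Fin n → ℝ)
    (h : ∀ t ∈ Set.Icc (0:ℝ) 1, ∑ a : Fin n, g a * t ^ (a:ℕ) = 0) : g = 0 := by
  set q : Polynomial ℝ := ∑ a : Fin n, Polynomial.C (g a) * Polynomial.X ^ (a:ℕ) with hq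
  have hqe : ∀ t : ℝ, q.eval t = ∑ a : Fin n, g a * t ^ (a:ℕ) := by
    intro t; simp [hq, Polynomial.eval_finset_sum]
  have hq0 : q = 0 := by
    apply Polynomial.eq_zero_of_infinite_isRoot
    refine (Set.infinite_coe_iff.1 (Set.Icc.infinite (show (0:ℝ) < 1 by norm_num))).mono fun t ht => ?_
    simp only [Set.mem_setOf_eq, Polynomial.IsRoot, hqe]
    exact h t ht
  funext a
  have : q.coeff (a : ℕ) = g a := by
    rw [hq]
    rw [Polynomial.finset_sum_coeff]
    rw [Finset.sum_eq_single a]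
    · simp
    · intro b _ hb
      simp only [Polynomial.coeff_C_mul, Polynomial.coeff_X_pow]
      rw [if_neg (fun hh => hb (Fin.val_injective hh.symm)), mul_zero]
    · simp
  rw [hq0] at this
  simpa using this.symm

noncomputable def pt (s t : ℝ) : EuclideanSpace ℝ (Fin 2) := (WithLp.equiv 2 (Fin 2 → ℝ)).symm ![s, t]

@[simp] lemma pt_zero (s t : ℝ) : pt s t 0 = s := rfl
@[simp] lemma pt_one (s t : ℝ) : pt s t 1 = t := rfl

lemma ev_zero_of_box {k : ℕ} (c : Fin (k+1) × Fin (k+1) → ℝ)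
    (h : ∀ x ∈ boxSet (fun _ => 0) (fun _ => 1), ev k c x = 0) : c = 0 := by
  have h' : ∀ s ∈ Set.Icc (0:ℝ) 1, ∀ t ∈ Set.Icc (0:ℝ) 1,
      ∑ a : Fin (k+1), ∑ b : Fin (k+1), c (a, b) * s ^ (a:ℕ) * t ^ (b:ℕ) = 0 := by
    intro s hs t ht
    have hmem : pt s t ∈ boxSet (fun _ => 0) (fun _ => 1) := by
      intro i
      fin_cases i <;> simpa [pt]
    have := h (pt s t) hmem
    simpa [ev, Fintype.sum_prod_type] using this
  have claim2 : ∀ a : Fin (k+1), ∀ t ∈ Set.Icc (0:ℝ) 1,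
      ∑ b : Fin (k+1), c (a, b) * t ^ (b:ℕ) = 0 := by
    intro a t ht
    have := polyfun_zero (fun a => ∑ b : Fin (k+1), c (a, b) * t ^ (b:ℕ)) ?_
    · exact congrFun this a
    · intro s hs
      rw [← h' s hs t ht]
      refine Finset.sum_congr rfl fun a _ => ?_
      rw [Finset.sum_mul]
      refine Finset.sum_congr rfl fun b _ => ?_
      ring
  funext m
  obtain ⟨a, b⟩ := m
  exact congrFun (polyfun_zero (fun b => c (a, b)) (claim2 a)) b

def USq : Set (EuclideanSpace ℝ (Fin 2)) := boxSet (fun _ => 0) (fun _ => 1)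

instance : CompactSpace USq := isCompact_iff_compactSpace.mp (isCompact_boxSet _ _)

noncomputable def evL (k : ℕ) : (Fin (k+1) × Fin (k+1) → ℝ) →ₗ[ℝ] C(USq, ℝ) where
  toFun c := ⟨fun u => ev k c u.1, (continuous_ev k c).comp continuous_subtype_val⟩
  map_add' c c' := by
    ext u; simp [ev, add_mul, Finset.sum_add_distrib]
  map_smul' r c := by
    ext u; simp [ev, Finset.mul_sum, mul_assoc]

lemma evL_injective (k : ℕ) : Function.Injective (evL k) := by
  rw [injective_iff_map_eq_zero]
  intro c hc
  refine ev_zero_of_box c fun x hx => ?_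
  have := congrFun (congrArg (fun (f : C(USq, ℝ)) => (f : USq → ℝ)) hc) ⟨x, hx⟩
  simpa [evL] using this

instance : SeminormedAddCommGroup C(USq, ℝ) := inferInstance

lemma coeff_bound (k : ℕ) : ∃ C : ℝ, 0 ≤ C ∧ ∀ (c : Fin (k+1) × Fin (k+1) → ℝ) (M : ℝ),
    0 ≤ M → (∀ x ∈ USq, |ev k c x| ≤ M) → ∀ m, |c m| ≤ C * M := by
  set e := LinearEquiv.ofInjective (evL k) (evL_injective k) with he
  set f := LinearMap.toContinuousLinearMap (e.symm.toLinearMap) with hf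
  refine ⟨‖f‖, f.opNorm_nonneg, fun c M hM0 hM m => ?_⟩
  have h1 : ‖evL k c‖ ≤ M := by
    rw [ContinuousMap.norm_le _ hM0]
    rintro ⟨x, hx⟩
    simpa [evL] using hM x hx
  have h2 : f (e c) = c := by
    simp [hf]
  calc |c m| ≤ ‖c‖ := by
        simpa using norm_le_pi_norm c m
    _ = ‖f (e c)‖ := by rw [h2]
    _ ≤ ‖f‖ * ‖e c‖ := f.le_opNorm _
    _ = ‖f‖ * ‖evL k c‖ := rfl
    _ ≤ ‖f‖ * M := mul_le_mul_of_nonneg_left h1 f.opNorm_nonneg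

lemma abs_pow_sub_pow_le' (t u : ℝ) (ht : |t| ≤ 1) (hu : |u| ≤ 1) (a : ℕ) :
    |t ^ a - u ^ a| ≤ a * |t - u| := by
  induction a with
  | zero => simp
  | succ n ih =>
    have hsplit : t ^ (n+1) - u ^ (n+1) = t * (t ^ n - u ^ n) + (t - u) * u ^ n := by ring
    have h1 : |t ^ (n+1) - u ^ (n+1)| ≤ |t| * |t ^ n - u ^ n| + |t - u| * |u| ^ n := by
      rw [hsplit]
      refine (abs_add_le _ _).trans ?_
      rw [abs_mul, abs_mul, abs_pow]
    have h2 : |t| * |t ^ n - u ^ n| ≤ |t ^ n - u ^ n| :=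
      mul_le_of_le_one_left (abs_nonneg _) ht
    have h3 : |t - u| * |u| ^ n ≤ |t - u| :=
      mul_le_of_le_one_right (abs_nonneg _) (pow_le_one₀ (abs_nonneg _) hu)
    push_cast
    linarith

lemma abs_coord_le (z : EuclideanSpace ℝ (Fin 2)) (i : Fin 2) : |z i| ≤ ‖z‖ := by
  rw [EuclideanSpace.norm_eq]
  calc |z i| = √(‖z i‖ ^ 2) := by rw [Real.sqrt_sq_eq_abs, Real.norm_eq_abs, abs_abs]
    _ ≤ √(∑ j : Fin 2, ‖z j‖ ^ 2) :=
        Real.sqrt_le_sqrt (Finset.single_le_sum (f := fun j => ‖z j‖ ^ 2)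
          (fun _ _ => sq_nonneg _) (mem_univ i))

lemma mono_diff (x0 x1 y0 y1 : ℝ) (hx0 : |x0| ≤ 1) (hx1 : |x1| ≤ 1) (hy0 : |y0| ≤ 1)
    (hy1 : |y1| ≤ 1) (a b : ℕ) :
    |x0 ^ a * x1 ^ b - y0 ^ a * y1 ^ b| ≤ a * |x0 - y0| + b * |x1 - y1| := by
  have key : x0 ^ a * x1 ^ b - y0 ^ a * y1 ^ b
      = x0 ^ a * (x1 ^ b - y1 ^ b) + (x0 ^ a - y0 ^ a) * y1 ^ b := by ring
  have h1 : |x0 ^ a * (x1 ^ b - y1 ^ b)| ≤ |x1 ^ b - y1 ^ b| := by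
    rw [abs_mul, abs_pow]
    exact mul_le_of_le_one_left (abs_nonneg _) (pow_le_one₀ (abs_nonneg _) hx0)
  have h2 : |(x0 ^ a - y0 ^ a) * y1 ^ b| ≤ |x0 ^ a - y0 ^ a| := by
    rw [abs_mul, abs_pow]
    exact mul_le_of_le_one_right (abs_nonneg _) (pow_le_one₀ (abs_nonneg _) hy1)
  have h3 := abs_pow_sub_pow_le' x1 y1 hx1 hy1 b
  have h4 := abs_pow_sub_pow_le' x0 y0 hx0 hy0 a
  calc |x0 ^ a * x1 ^ b - y0 ^ a * y1 ^ b|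
      ≤ |x0 ^ a * (x1 ^ b - y1 ^ b)| + |(x0 ^ a - y0 ^ a) * y1 ^ b| := by
        rw [key]; exact abs_add_le _ _
    _ ≤ a * |x0 - y0| + b * |x1 - y1| := by linarith

lemma markov (k : ℕ) : ∃ K : ℝ, 1 ≤ K ∧ ∀ (c : Fin (k+1) × Fin (k+1) → ℝ) (M : ℝ),
    0 ≤ M → (∀ x ∈ USq, |ev k c x| ≤ M) →
    ∀ x ∈ USq, ∀ y ∈ USq, |ev k c x - ev k c y| ≤ K * M * ‖x - y‖ := by
  obtain ⟨C, hC0, hC⟩ := coeff_bound k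
  refine ⟨(k+1)^2 * (C * (2*k)) + 1, by
    have : (0:ℝ) ≤ (k+1)^2 * (C * (2*k)) := by positivity
    linarith, fun c M hM0 hM x hx y hy => ?_⟩
  have hcoef := hC c M hM0 hM
  have coords : ∀ z ∈ USq, ∀ i : Fin 2, |z i| ≤ 1 := by
    intro z hz i
    have := hz i
    simp only [Set.mem_Icc] at this
    rw [abs_le]
    exact ⟨by linarith [this.1], this.2⟩
  have hnorm : ∀ i : Fin 2, |x i - y i| ≤ ‖x - y‖ := by
    intro i
    have := abs_coord_le (x - y) i
    rwa [PiLp.sub_apply] at this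
  have hdiff : ev k c x - ev k c y = ∑ m : Fin (k+1) × Fin (k+1),
      c m * (x 0 ^ (m.1:ℕ) * x 1 ^ (m.2:ℕ) - y 0 ^ (m.1:ℕ) * y 1 ^ (m.2:ℕ)) := by
    rw [ev, ev, ← Finset.sum_sub_distrib]
    exact Finset.sum_congr rfl fun m _ => by ring
  have per : ∀ m : Fin (k+1) × Fin (k+1),
      |c m * (x 0 ^ (m.1:ℕ) * x 1 ^ (m.2:ℕ) - y 0 ^ (m.1:ℕ) * y 1 ^ (m.2:ℕ))|
        ≤ (C * M) * ((2*k) * ‖x - y‖) := by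
    intro m
    rw [abs_mul]
    have hd := mono_diff (x 0) (x 1) (y 0) (y 1) (coords x hx 0) (coords x hx 1)
      (coords y hy 0) (coords y hy 1) m.1 m.2
    have ha : (m.1 : ℝ) ≤ k := by exact_mod_cast Nat.lt_succ_iff.mp m.1.isLt
    have hb : (m.2 : ℝ) ≤ k := by exact_mod_cast Nat.lt_succ_iff.mp m.2.isLt
    have hsum : (m.1:ℝ) * |x 0 - y 0| + (m.2:ℝ) * |x 1 - y 1| ≤ (2*k) * ‖x - y‖ := by
      have n0 := hnorm 0; have n1 := hnorm 1
      have k0 : (0:ℝ) ≤ (m.1:ℝ) := by positivity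
      have k1 : (0:ℝ) ≤ (m.2:ℝ) := by positivity
      nlinarith [abs_nonneg (x 0 - y 0), abs_nonneg (x 1 - y 1), norm_nonneg (x - y)]
    refine mul_le_mul (hcoef m) (hd.trans hsum) (abs_nonneg _) (by positivity)
  calc |ev k c x - ev k c y| ≤ ∑ m : Fin (k+1) × Fin (k+1),
        |c m * (x 0 ^ (m.1:ℕ) * x 1 ^ (m.2:ℕ) - y 0 ^ (m.1:ℕ) * y 1 ^ (m.2:ℕ))| := by
        rw [hdiff]; exact Finset.abs_sum_le_sum_abs _ _
    _ ≤ ∑ _m : Fin (k+1) × Fin (k+1), (C * M) * ((2*k) * ‖x - y‖) :=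
        Finset.sum_le_sum fun m _ => per m
    _ = (k+1)^2 * (C * (2*k)) * M * ‖x - y‖ := by
        rw [Finset.sum_const]
        simp [Fintype.card_prod]
        ring
    _ ≤ ((k+1)^2 * (C * (2*k)) + 1) * M * ‖x - y‖ := by
        have : (0:ℝ) ≤ M * ‖x - y‖ := by positivity
        nlinarith

def RepFn (k : ℕ) (f : EuclideanSpace ℝ (Fin 2) → ℝ) : Prop := ∃ c, ∀ x, f x = ev k c x

lemma repFn_zero (k : ℕ) : RepFn k (fun _ => 0) := ⟨0, by simp [ev]⟩

lemma repFn_add {k : ℕ} {f g : EuclideanSpace ℝ (Fin 2) → ℝ} (hf : RepFn k f) (hg : RepFn k g) :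
    RepFn k (fun x => f x + g x) := by
  obtain ⟨c, hc⟩ := hf; obtain ⟨c', hc'⟩ := hg
  exact ⟨c + c', fun x => by simp [ev, hc, hc', add_mul, Finset.sum_add_distrib]⟩

lemma repFn_sum {k : ℕ} {α : Type*} {t : Finset α} {F : α → EuclideanSpace ℝ (Fin 2) → ℝ}
    (h : ∀ a ∈ t, RepFn k (F a)) : RepFn k (fun x => ∑ a ∈ t, F a x) := by
  classical
  induction t using Finset.induction_on with
  | empty => simpa using repFn_zero k
  | @insert a t hnotmem ih =>
    simp only [Finset.sum_insert hnotmem]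
    exact repFn_add (h _ (Finset.mem_insert_self _ _))
      (ih fun a ha => h a (Finset.mem_insert_of_mem ha))

lemma repFn_monomial (k : ℕ) (r : ℝ) (a b : ℕ) (ha : a ≤ k) (hb : b ≤ k) :
    RepFn k (fun x => r * x 0 ^ a * x 1 ^ b) := by
  refine ⟨fun m => if m = (⟨a, Nat.lt_succ_of_le ha⟩, ⟨b, Nat.lt_succ_of_le hb⟩) then r else 0,
    fun x => ?_⟩
  rw [ev, Finset.sum_eq_single ((⟨a, Nat.lt_succ_of_le ha⟩, ⟨b, Nat.lt_succ_of_le hb⟩) :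
    Fin (k+1) × Fin (k+1))]
  · simp
  · intro m _ hne
    simp [if_neg hne]
  · simp

lemma repFn_poly {k : ℕ} {P : EuclideanSpace ℝ (Fin 2) → ℝ} (hP : IsPolyDeg P k)
    (c₀ : EuclideanSpace ℝ (Fin 2)) (s : ℝ) :
    ∃ c, ∀ u, P (c₀ + s • u) = ev k c u := by
  obtain ⟨p, hdeg, hPx⟩ := hP
  suffices h : RepFn k (fun u => MvPolynomial.eval (fun i => c₀ i + s * u i) p) by
    obtain ⟨c, hc⟩ := h
    refine ⟨c, fun u => ?_⟩
    rw [hPx, ← hc u]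
    congr 1
  have hrw : (fun u : EuclideanSpace ℝ (Fin 2) =>
      MvPolynomial.eval (fun i => c₀ i + s * u i) p) = fun u => ∑ d ∈ p.support,
      MvPolynomial.coeff d p * ((c₀ 0 + s * u 0) ^ d 0 * (c₀ 1 + s * u 1) ^ d 1) := by
    funext u
    rw [MvPolynomial.eval_eq']
    exact Finset.sum_congr rfl fun d _ => by rw [Fin.prod_univ_two]
  rw [hrw]
  apply repFn_sum
  intro d hd
  have hdd : ∀ i : Fin 2, d i ≤ k := by
    intro i
    refine le_trans (le_trans ?_ (MvPolynomial.le_totalDegree hd)) hdeg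
    rw [Finsupp.sum]
    by_cases h : d i = 0
    · simp [h]
    · exact Finset.single_le_sum (fun _ _ => Nat.zero_le _) (Finsupp.mem_support_iff.2 h)
  have hexp : (fun u : EuclideanSpace ℝ (Fin 2) =>
      MvPolynomial.coeff d p * ((c₀ 0 + s * u 0) ^ d 0 * (c₀ 1 + s * u 1) ^ d 1)) =
      fun u => ∑ j ∈ Finset.range (d 0 + 1), ∑ l ∈ Finset.range (d 1 + 1),
        (MvPolynomial.coeff d p * (c₀ 0 ^ j * s ^ (d 0 - j) * ((d 0).choose j : ℝ))
          * (c₀ 1 ^ l * s ^ (d 1 - l) * ((d 1).choose l : ℝ)))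
          * u 0 ^ (d 0 - j) * u 1 ^ (d 1 - l) := by
    funext u
    rw [add_pow, add_pow, Finset.sum_mul_sum]
    simp only [Finset.mul_sum]
    exact Finset.sum_congr rfl fun j _ => Finset.sum_congr rfl fun l _ => by ring
  rw [hexp]
  apply repFn_sum
  intro j _
  apply repFn_sum
  intro l _
  exact repFn_monomial k _ _ _ (le_trans (Nat.sub_le _ _) (hdd 0))
    (le_trans (Nat.sub_le _ _) (hdd 1))

end

end PolyModularAux

open PolyModularAux Finset

/-- for a doubling Young function `Ψ`, a square `Q` and a polynomial `P`
of degree at most `k`, one has `∫_Q Ψ(|P|) ≤ |Q| Ψ(max_Q |P|)`, and conversely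
`∫_Q Ψ(|P|) ≥ c |Q| Ψ(max_Q |P|)` with `c = c(k, C₀) > 0`. -/
theorem poly_modular_max_comparison (k : ℕ) (C0 : ℝ) :
    ∃ c : ℝ, 0 < c ∧ ∀ Ψ : ℝ → ℝ,
      ConvexOn ℝ (Set.Ici 0) Ψ →
      MonotoneOn Ψ (Set.Ici 0) →
      Ψ 0 = 0 →
      (∀ t : ℝ, 0 ≤ t → 0 ≤ Ψ t) →
      (∀ t : ℝ, 0 ≤ t → Ψ (2 * t) ≤ C0 * Ψ t) →
      ∀ (Q : Set (EuclideanSpace ℝ (Fin 2))) (c₀ : EuclideanSpace ℝ (Fin 2)) (s : ℝ),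
        IsSquare2 Q c₀ s →
        ∀ P : EuclideanSpace ℝ (Fin 2) → ℝ, IsPolyDeg P k →
          (∫ x in Q, Ψ (|P x|)) ≤ (volume Q).toReal * Ψ (⨆ y ∈ Q, |P y|) ∧
          c * ((volume Q).toReal * Ψ (⨆ y ∈ Q, |P y|)) ≤ ∫ x in Q, Ψ (|P x|) := by
  obtain ⟨K, hK1, hmar⟩ := markov k
  have hK0 : (0:ℝ) < K := zero_lt_one.trans_le hK1
  have hC' : (0:ℝ) < max C0 1 := zero_lt_one.trans_le (le_max_right _ _)
  refine ⟨1 / (16 * K^2 * max C0 1), ?_, ?_⟩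
  · apply div_pos one_pos
    exact mul_pos (mul_pos (by norm_num) (pow_pos hK0 2)) hC'
  intro Ψ hconv hmono h0 hpos hdbl Q c₀ s hSq P hP
  obtain ⟨hs, hQ⟩ := hSq
  obtain ⟨cc, hcc⟩ := repFn_poly hP c₀ s
  have hsne : s ≠ 0 := ne_of_gt hs
  have hQbox : Q = boxSet (fun i => c₀ i) (fun i => c₀ i + s) := hQ
  have hQmem : ∀ x : EuclideanSpace ℝ (Fin 2),
      x ∈ Q ↔ ∀ i : Fin 2, x i ∈ Set.Icc (c₀ i) (c₀ i + s) := by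
    intro x; rw [hQ]; exact Iff.rfl
  -- the inverse affine map
  have hφψ : ∀ x : EuclideanSpace ℝ (Fin 2), c₀ + s • (s⁻¹ • (x - c₀)) = x := by
    intro x
    rw [smul_smul, mul_inv_cancel₀ hsne, one_smul]
    abel
  have hψcoord : ∀ (x : EuclideanSpace ℝ (Fin 2)) (i : Fin 2),
      (s⁻¹ • (x - c₀)) i = s⁻¹ * (x i - c₀ i) := by
    intro x i
    rw [PiLp.smul_apply, PiLp.sub_apply, smul_eq_mul]
  have hψmem : ∀ x ∈ Q, s⁻¹ • (x - c₀) ∈ USq := by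
    intro x hx i
    have h1 := ((hQmem x).1 hx i).1
    have h2 := ((hQmem x).1 hx i).2
    rw [hψcoord]
    constructor
    · exact mul_nonneg (inv_nonneg.2 hs.le) (by linarith)
    · calc s⁻¹ * (x i - c₀ i) ≤ s⁻¹ * s :=
            mul_le_mul_of_nonneg_left (by linarith) (inv_nonneg.2 hs.le)
        _ = 1 := inv_mul_cancel₀ hsne
  have hPev : ∀ x : EuclideanSpace ℝ (Fin 2), P x = ev k cc (s⁻¹ • (x - c₀)) := by
    intro x
    have := hcc (s⁻¹ • (x - c₀))
    rwa [hφψ] at this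
  have hPcont : Continuous P := by
    have : P = fun x => ev k cc (s⁻¹ • (x - c₀)) := funext hPev
    rw [this]
    exact (continuous_ev k cc).comp (by fun_prop)
  have hQcompact : IsCompact Q := hQbox ▸ isCompact_boxSet _ _
  have hQmeas : MeasurableSet Q := hQbox ▸ measurableSet_boxSet _ _
  have hQne : Q.Nonempty := ⟨c₀, (hQmem c₀).2 fun i => ⟨le_refl _, by linarith⟩⟩
  obtain ⟨z, hzQ, hzmax⟩ := hQcompact.exists_isMaxOn hQne
    (show ContinuousOn (fun y => |P y|) Q from (hPcont.abs).continuousOn)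
  set M := ⨆ y ∈ Q, |P y| with hMdef
  have hzmax' : ∀ y ∈ Q, |P y| ≤ |P z| := fun y hy => hzmax hy
  have hMz : M = |P z| := by
    apply le_antisymm
    · exact Real.iSup_le (fun y => Real.iSup_le (fun hy => hzmax' y hy) (abs_nonneg _))
        (abs_nonneg _)
    · have hbdd : BddAbove (Set.range fun y => ⨆ _ : y ∈ Q, |P y|) := by
        refine ⟨|P z|, ?_⟩
        rintro _ ⟨y, rfl⟩
        exact Real.iSup_le (fun hy => hzmax' y hy) (abs_nonneg _)
      have := le_ciSup hbdd z
      rwa [ciSup_pos hzQ] at this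
  have hM0 : 0 ≤ M := hMz ▸ abs_nonneg _
  have hMy : ∀ y ∈ Q, |P y| ≤ M := fun y hy => hMz ▸ hzmax' y hy
  -- volume of Q
  have hvolQ : (volume Q).toReal = s * s := by
    rw [hQbox, volume_boxSet, Fin.prod_univ_two]
    simp only [add_sub_cancel_left]
    rw [ENNReal.toReal_mul, ENNReal.toReal_ofReal hs.le]
  have hvolQfin : volume Q < ⊤ := by
    rw [hQbox, volume_boxSet, Fin.prod_univ_two]
    exact ENNReal.mul_lt_top ENNReal.ofReal_lt_top ENNReal.ofReal_lt_top
  -- measurability and integrability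
  have hg : Monotone (fun t : ℝ => Ψ (max t 0)) := by
    intro t u htu
    exact hmono (le_max_right t 0) (le_max_right u 0) (max_le_max htu (le_refl 0))
  have hΨPeq : (fun x => Ψ (|P x|)) = (fun t : ℝ => Ψ (max t 0)) ∘ (fun x => |P x|) := by
    funext x
    simp [max_eq_left (abs_nonneg (P x))]
  have hmeas : Measurable (fun x => Ψ (|P x|)) := by
    rw [hΨPeq]
    exact hg.measurable.comp hPcont.abs.measurable
  have hintQ : IntegrableOn (fun x => Ψ (|P x|)) Q := by
    refine Integrable.mono' (g := fun _ => Ψ M)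
      (integrableOn_const hvolQfin.ne) hmeas.aestronglyMeasurable ?_
    refine (ae_restrict_iff' hQmeas).2 (Filter.Eventually.of_forall fun x hx => ?_)
    rw [Real.norm_eq_abs, abs_of_nonneg (hpos _ (abs_nonneg _))]
    exact hmono (Set.mem_Ici.2 (abs_nonneg _)) (Set.mem_Ici.2 hM0) (hMy x hx)
  constructor
  · -- upper bound
    calc (∫ x in Q, Ψ (|P x|)) ≤ ∫ _x in Q, Ψ M := by
          refine setIntegral_mono_on hintQ (integrableOn_const hvolQfin.ne) hQmeas ?_
          exact fun x hx => hmono (Set.mem_Ici.2 (abs_nonneg _)) (Set.mem_Ici.2 hM0) (hMy x hx)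
      _ = (volume Q).toReal * Ψ M := by rw [setIntegral_const, smul_eq_mul, measureReal_def]
  · -- lower bound
    set t : ℝ := s / (4 * K) with htdef
    have ht0 : 0 < t := div_pos hs (by positivity)
    have hts : t ≤ s / 4 := by
      rw [htdef, div_le_div_iff₀ (by positivity) (by norm_num)]
      nlinarith
    set l : Fin 2 → ℝ := fun i => if c₀ i + s/2 ≤ z i then z i - t else z i with hldef
    set B : Set (EuclideanSpace ℝ (Fin 2)) := boxSet l (fun i => l i + t) with hBdef
    have hzQ' := (hQmem z).1 hzQ
    have hBQ : B ⊆ Q := by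
      intro y hy
      rw [hQmem]
      intro i
      have hyi := hy i
      have hz1 := (hzQ' i).1
      have hz2 := (hzQ' i).2
      simp only [hldef] at hyi
      by_cases hcase : c₀ i + s/2 ≤ z i
      · rw [if_pos hcase] at hyi
        exact ⟨by linarith [hyi.1], by linarith [hyi.2]⟩
      · push_neg at hcase
        rw [if_neg (not_le.2 hcase)] at hyi
        exact ⟨by linarith [hyi.1], by linarith [hyi.2]⟩
    have hzB : z ∈ B := by
      intro i
      simp only [hldef]
      by_cases hcase : c₀ i + s/2 ≤ z i
      · rw [if_pos hcase]
        exact ⟨by linarith, by linarith⟩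
      · rw [if_neg hcase]
        exact ⟨le_refl _, by linarith⟩
    have hBdist : ∀ y ∈ B, ‖y - z‖ ≤ 2 * t := by
      intro y hy
      have hcoord : ∀ i : Fin 2, |y i - z i| ≤ t := by
        intro i
        have h1 : l i ≤ y i := (hy i).1
        have h2 : y i ≤ l i + t := (hy i).2
        have h3 : l i ≤ z i := (hzB i).1
        have h4 : z i ≤ l i + t := (hzB i).2
        rw [abs_le]
        exact ⟨by linarith, by linarith⟩
      rw [EuclideanSpace.norm_eq]
      have : √(∑ i : Fin 2, ‖(y - z) i‖ ^ 2) ≤ √((2*t)^2) := by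
        apply Real.sqrt_le_sqrt
        rw [Fin.sum_univ_two]
        have e0 : ‖(y - z) 0‖ = |y 0 - z 0| := by rw [PiLp.sub_apply, Real.norm_eq_abs]
        have e1 : ‖(y - z) 1‖ = |y 1 - z 1| := by rw [PiLp.sub_apply, Real.norm_eq_abs]
        rw [e0, e1]
        nlinarith [hcoord 0, hcoord 1, abs_nonneg (y 0 - z 0), abs_nonneg (y 1 - z 1), ht0]
      refine this.trans ?_
      rw [Real.sqrt_sq (by linarith)]
    have hevle : ∀ u ∈ USq, |ev k cc u| ≤ M := by
      intro u hu
      have hmem : c₀ + s • u ∈ Q := by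
        rw [hQmem]
        intro i
        have h1 : (0:ℝ) ≤ u i := (hu i).1
        have h2 : u i ≤ 1 := (hu i).2
        have hc : (c₀ + s • u) i = c₀ i + s * u i := by
          rw [PiLp.add_apply, PiLp.smul_apply, smul_eq_mul]
        rw [hc]
        constructor
        · nlinarith
        · nlinarith
      rw [← hcc u]
      exact hMy _ hmem
    have hlow : ∀ y ∈ B, M / 2 ≤ |P y| := by
      intro y hy
      have hyQ : y ∈ Q := hBQ hy
      have hdiff : |P y - P z| ≤ M / 2 := by
        have h1 := hmar cc M hM0 hevle (s⁻¹ • (y - c₀)) (hψmem y hyQ)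
          (s⁻¹ • (z - c₀)) (hψmem z hzQ)
        rw [← hPev y, ← hPev z] at h1
        have hdist : ‖s⁻¹ • (y - c₀) - s⁻¹ • (z - c₀)‖ = s⁻¹ * ‖y - z‖ := by
          rw [← smul_sub, norm_smul, Real.norm_eq_abs, abs_of_pos (inv_pos.2 hs)]
          congr 2
          abel
        rw [hdist] at h1
        refine h1.trans ?_
        have hnb := hBdist y hy
        have hnn : (0:ℝ) ≤ ‖y - z‖ := norm_nonneg _
        calc K * M * (s⁻¹ * ‖y - z‖) ≤ K * M * (s⁻¹ * (2 * t)) := by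
              apply mul_le_mul_of_nonneg_left _ (by positivity)
              exact mul_le_mul_of_nonneg_left hnb (inv_nonneg.2 hs.le)
          _ = M / 2 := by
              rw [htdef]
              field_simp
              ring
        -- done
      have habs := abs_sub_abs_le_abs_sub (P z) (P y)
      rw [abs_sub_comm] at habs
      have hPz : |P z| = M := hMz.symm
      linarith
    -- volume of B
    have hvolB : (volume B).toReal = t * t := by
      rw [hBdef, volume_boxSet, Fin.prod_univ_two]
      simp only [add_sub_cancel_left]
      rw [ENNReal.toReal_mul, ENNReal.toReal_ofReal ht0.le]
    have hvolBfin : volume B < ⊤ := by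
      rw [hBdef, volume_boxSet, Fin.prod_univ_two]
      exact ENNReal.mul_lt_top ENNReal.ofReal_lt_top ENNReal.ofReal_lt_top
    have hBmeas : MeasurableSet B := hBdef ▸ measurableSet_boxSet _ _
    have step1 : ∫ x in B, Ψ (M/2) ≤ ∫ x in B, Ψ (|P x|) := by
      refine setIntegral_mono_on (integrableOn_const hvolBfin.ne)
        (hintQ.mono_set hBQ) hBmeas ?_
      exact fun y hy => hmono (Set.mem_Ici.2 (by linarith)) (Set.mem_Ici.2 (abs_nonneg _)) (hlow y hy)
    have step2 : ∫ x in B, Ψ (|P x|) ≤ ∫ x in Q, Ψ (|P x|) := by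
      refine setIntegral_mono_set hintQ ?_ (HasSubset.Subset.eventuallyLE hBQ)
      exact Filter.Eventually.of_forall fun x => hpos _ (abs_nonneg _)
    have hconstB : ∫ _x in B, Ψ (M/2) = t * t * Ψ (M/2) := by
      rw [setIntegral_const, smul_eq_mul, measureReal_def, hvolB]
    have hdouble : Ψ M ≤ max C0 1 * Ψ (M/2) := by
      have h1 := hdbl (M/2) (by linarith)
      have h2 : 2 * (M/2) = M := by ring
      rw [h2] at h1
      refine h1.trans ?_
      exact mul_le_mul_of_nonneg_right (le_max_left _ _) (hpos _ (by linarith))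
    rw [hvolQ]
    calc 1 / (16 * K^2 * max C0 1) * (s * s * Ψ M)
        ≤ 1 / (16 * K^2 * max C0 1) * (s * s * (max C0 1 * Ψ (M/2))) := by
          apply mul_le_mul_of_nonneg_left _ (by positivity)
          exact mul_le_mul_of_nonneg_left hdouble (by positivity)
      _ = t * t * Ψ (M/2) := by
          rw [htdef]
          field_simp
          ring
      _ ≤ ∫ x in B, Ψ (|P x|) := by rw [← hconstB]; exact step1
      _ ≤ ∫ x in Q, Ψ (|P x|) := step2
end
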